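/- arXiv:2005.09789 — 8 statements merged into one kernel-verified Lean document; each statement's English description precedes it below -/
import Mathlib

section
/- Let Cat denote the category of small categories and functors, and let τ : Cat ⥤ C̄at be the quotient functor to the category C̄at having the same objects as Cat and whose morphisms are natural-isomorphism classes of functors (τ is the identity on objects and sends a functor to its isomorphism class). Then for every category 𝒞 and every functor γ : Cat ⥤ 𝒞 that inverts all equivalences (i.e. γ sends every functor which is an equivalence of categories to an isomorphism of 𝒞), there exists a functor γ' : C̄at ⥤ 𝒞 with γ' ∘ τ = γ, and such a γ' is unique. -/
open CategoryTheory

universe w z v u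

namespace Paper

/-- The category `C̄at`: same objects as `Cat`, morphisms are natural-isomorphism
classes of functors. -/
def BarCat : Type (max (v + 1) (u + 1)) := Cat.{v, u}

/-- The underlying small category of an object of `C̄at`. -/
def BarCat.toCat (X : BarCat.{v, u}) : Cat.{v, u} := X

instance : Category.{max v u} BarCat.{v, u} where
  Hom X Y := Quotient (isIsomorphicSetoid (↑X.toCat ⥤ ↑Y.toCat))
  id X := Quotient.mk _ (𝟭 ↑X.toCat)
  comp {X Y Z} F G :=
    Quotient.lift₂ (fun (F : ↑X.toCat ⥤ ↑Y.toCat) (G : ↑Y.toCat ⥤ ↑Z.toCat) =>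
        Quotient.mk (isIsomorphicSetoid (↑X.toCat ⥤ ↑Z.toCat)) (F ⋙ G))
      (fun F₀ G₀ F₁ G₁ hF hG => Quotient.sound
        ⟨Functor.isoWhiskerRight (Nonempty.some hF) G₀ ≪≫ Functor.isoWhiskerLeft F₁ (Nonempty.some hG)⟩) F G
  id_comp {X Y} F := by
    induction F using Quotient.inductionOn with
    | h F => exact Quotient.sound ⟨F.leftUnitor⟩
  comp_id {X Y} F := by
    induction F using Quotient.inductionOn with
    | h F => exact Quotient.sound ⟨F.rightUnitor⟩
  assoc {W X Y Z} F G H := by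
    induction F using Quotient.inductionOn with
    | h F =>
      induction G using Quotient.inductionOn with
      | h G =>
        induction H using Quotient.inductionOn with
        | h H => exact Quotient.sound ⟨Functor.associator F G H⟩

/-- The quotient functor `τ : Cat ⥤ C̄at`: identity on objects, sending a functor
to its natural-isomorphism class. -/
def tau : Cat.{v, u} ⥤ BarCat.{v, u} where
  obj X := X
  map {X Y} F := Quotient.mk (isIsomorphicSetoid (↑X ⥤ ↑Y)) F.toFunctor
  map_id X := rfl
  map_comp F G := rfl


/-- The interval groupoid: two objects, a unique morphism between any two. -/
def J : Type u := ULift Bool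

instance : Category.{v} J.{u} where
  Hom _ _ := PUnit
  id _ := ⟨⟩
  comp _ _ := ⟨⟩

section Cylinder

set_option linter.unnecessarySeqFocus false

variable {C D : Type u} [Category.{v} C] [Category.{v} D]

/-- Insertion of `C` into the cylinder `C × J` at height `b`. -/
def ins (C : Type u) [Category.{v} C] (b : Bool) : C ⥤ C × J.{u} where
  obj a := (a, ⟨b⟩)
  map f := (f, ⟨⟩)

/-- Projection of the cylinder onto `C`. -/
def cylFst (C : Type u) [Category.{v} C] : C × J.{u} ⥤ C where
  obj p := p.1
  map f := f.1

/-- The equivalence between `C` and `C × J` given by inserting `b`. -/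
def cylEquiv (C : Type u) [Category.{v} C] (b : Bool) :
    Equivalence C (C × J.{u}) where
  functor := ins C b
  inverse := cylFst C
  unitIso := Iso.refl _
  counitIso := NatIso.ofComponents
    (fun p => ⟨(𝟙 p.1, ⟨⟩), (𝟙 p.1, ⟨⟩),
      by apply Prod.ext <;> (try rfl) <;> simp [ins, cylFst],
      by apply Prod.ext <;> (try rfl) <;> simp [ins, cylFst]⟩)
    (by intro p q f; apply Prod.ext <;> (try rfl) <;> simp [ins, cylFst])
  functor_unitIso_comp X := by apply Prod.ext <;> (try rfl) <;> simp [ins, cylFst]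

lemma ins_comp_fst (b : Bool) : ins C b ⋙ cylFst C = 𝟭 C := rfl

/-- Component isomorphisms for the cylinder functor. -/
def cylIso {F G : C ⥤ D} (α : F ≅ G) : ∀ (j : Bool) (a : C),
    F.obj a ≅ cond j (G.obj a) (F.obj a)
  | false, _ => Iso.refl _
  | true, a => α.app a

/-- The cylinder functor associated to a natural isomorphism. -/
def cyl {F G : C ⥤ D} (α : F ≅ G) : C × J.{u} ⥤ D where
  obj p := cond p.2.down (G.obj p.1) (F.obj p.1)
  map {p q} f := (cylIso α p.2.down p.1).inv ≫ F.map f.1 ≫ (cylIso α q.2.down q.1).hom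
  map_id p := by simp
  map_comp {p q r} f g := by simp

lemma cyl_left {F G : C ⥤ D} (α : F ≅ G) : ins C false ⋙ cyl α = F := by
  refine CategoryTheory.Functor.ext (fun a => rfl) (fun a b f => ?_)
  simp [cyl, cylIso, ins]
  exact (Category.id_comp _).symm

lemma cyl_right {F G : C ⥤ D} (α : F ≅ G) : ins C true ⋙ cyl α = G := by
  refine CategoryTheory.Functor.ext (fun a => rfl) (fun a b f => ?_)
  simp [cyl, cylIso, ins]
  exact (Category.id_comp _).symm

end Cylinder

/-- A functor out of `Cat` inverting equivalences identifies naturally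
isomorphic functors. -/
lemma gamma_congr {𝒞 : Type w} [Category.{z} 𝒞] (γ : Cat.{v, u} ⥤ 𝒞)
    (hγ : ∀ {I I' : Cat.{v, u}} (F : I ⟶ I'),
      (F.toFunctor : ↑I ⥤ ↑I').IsEquivalence → IsIso (γ.map F))
    {I I' : Cat.{v, u}} (F G : I ⟶ I') (α : (F.toFunctor : ↑I ⥤ ↑I') ≅ G.toFunctor) :
    γ.map F = γ.map G := by
  let IJ : Cat.{v, u} := Cat.of (↑I × J.{u})
  let i0 : I ⟶ IJ := (ins ↑I false).toCatHom
  let i1 : I ⟶ IJ := (ins ↑I true).toCatHom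
  let pr : IJ ⟶ I := (cylFst ↑I).toCatHom
  have hi0 : IsIso (γ.map i0) := hγ i0 (cylEquiv ↑I false).isEquivalence_functor
  have hpr : IsIso (γ.map pr) := hγ pr (cylEquiv ↑I false).symm.isEquivalence_functor
  have h0 : γ.map i0 ≫ γ.map pr = 𝟙 (γ.obj I) := by
    rw [← γ.map_comp]
    have h : i0 ≫ pr = 𝟙 I := Cat.ext (ins_comp_fst false)
    rw [h, γ.map_id]
  have h1 : γ.map i1 ≫ γ.map pr = 𝟙 (γ.obj I) := by
    rw [← γ.map_comp]
    have h : i1 ≫ pr = 𝟙 I := Cat.ext (ins_comp_fst true)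
    rw [h, γ.map_id]
  have key : γ.map i0 = γ.map i1 := (cancel_mono (γ.map pr)).mp (h0.trans h1.symm)
  have hF : i0 ≫ ((cyl α).toCatHom : IJ ⟶ I') = F := Cat.ext (cyl_left α)
  have hG : i1 ≫ ((cyl α).toCatHom : IJ ⟶ I') = G := Cat.ext (cyl_right α)
  have eF : γ.map F = γ.map i0 ≫ γ.map ((cyl α).toCatHom : IJ ⟶ I') := by rw [← γ.map_comp, hF]; exact rfl
  have eG : γ.map G = γ.map i1 ≫ γ.map ((cyl α).toCatHom : IJ ⟶ I') := by rw [← γ.map_comp, hG]; exact rfl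
  rw [eF, eG, key]

/-- Every functor `γ : Cat ⥤ 𝒞` that inverts all equivalences of
small categories factors uniquely through the quotient functor `τ : Cat ⥤ C̄at`. -/
theorem stmt0 {𝒞 : Type w} [Category.{z} 𝒞] (γ : Cat.{v, u} ⥤ 𝒞)
    (hγ : ∀ {I I' : Cat.{v, u}} (F : I ⟶ I'),
      (F.toFunctor : ↑I ⥤ ↑I').IsEquivalence → IsIso (γ.map F)) :
    ∃! γ' : BarCat.{v, u} ⥤ 𝒞, tau ⋙ γ' = γ := by
  refine ⟨{ obj := fun X => γ.obj X.toCat,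
            map := fun {X Y} f => Quotient.lift
              (fun F : ↑X.toCat ⥤ ↑Y.toCat => γ.map (F.toCatHom : X.toCat ⟶ Y.toCat))
              (fun F G h => gamma_congr γ hγ F.toCatHom G.toCatHom (Nonempty.some h)) f,
            map_id := fun X => γ.map_id X.toCat,
            map_comp := fun {X Y Z} f g => ?_ }, ?_, ?_⟩
  · induction f using Quotient.inductionOn with
    | h F =>
      induction g using Quotient.inductionOn with
      | h G => exact γ.map_comp F.toCatHom G.toCatHom
  · rfl
  · intro g hg
    refine CategoryTheory.Functor.ext (fun X => Functor.congr_obj hg X.toCat)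
      (fun X Y f => ?_)
    induction f using Quotient.inductionOn with
    | h F => exact Functor.congr_hom hg F.toCatHom

end Paper
end

section
/- Let 𝒞 be a category and γ : Cat ⥤ 𝒞 a functor from the category of small categories that sends every functor which is an equivalence of categories to an isomorphism of 𝒞. Then γ identifies naturally isomorphic functors: for any small categories I, I' and any functors F₀, F₁ : I ⥤ I' admitting a natural isomorphism F₀ ≅ F₁, one has γ(F₀) = γ(F₁) as morphisms γ(I) ⟶ γ(I') in 𝒞. -/
open CategoryTheory

universe w z v u

attribute [-instance] CategoryTheory.uniformProd

namespace Stmt1Aux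

/-- The indiscrete category on two objects (the "walking isomorphism"). -/
inductive J : Type u
  | zero : J
  | one : J

instance : Category.{v} (J.{u}) where
  Hom _ _ := PUnit
  id _ := ⟨⟩
  comp _ _ := ⟨⟩

variable {I I' : Type u} [Category.{v} I] [Category.{v} I']
  (F₀ F₁ : I ⥤ I') (e : F₀ ≅ F₁)

def Fb : J.{u} → (I ⥤ I')
  | .zero => F₀
  | .one => F₁

def τ : ∀ b b' : J.{u}, (Fb F₀ F₁ b ⟶ Fb F₀ F₁ b')
  | .zero, .zero => 𝟙 _
  | .zero, .one => e.hom
  | .one, .zero => e.inv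
  | .one, .one => 𝟙 _

lemma τ_id (b : J.{u}) : τ F₀ F₁ e b b = 𝟙 _ := by
  cases b <;> rfl

lemma τ_comp (a b c : J.{u}) :
    τ F₀ F₁ e a b ≫ τ F₀ F₁ e b c = τ F₀ F₁ e a c := by
  cases a <;> cases b <;> cases c <;> simp [τ, Fb]

/-- The cylinder functor interpolating between `F₀` and `F₁`. -/
def H : J.{u} × I ⥤ I' where
  obj p := (Fb F₀ F₁ p.1).obj p.2
  map {p q} f := (τ F₀ F₁ e p.1 q.1).app p.2 ≫ (Fb F₀ F₁ q.1).map f.2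
  map_id p := by simp [τ_id]
  map_comp {p q r} f g := by
    rw [← τ_comp F₀ F₁ e p.1 q.1 r.1]
    simp only [NatTrans.comp_app, Functor.map_comp, Category.assoc, prod_comp_snd]
    congr 1
    rw [← NatTrans.naturality_assoc]

lemma sect_H (b : J.{u}) :
    Prod.sectR b I ⋙ H F₀ F₁ e = Fb F₀ F₁ b := by
  cases b <;>
  · refine CategoryTheory.Functor.ext (fun x => rfl) (fun x y f => ?_)
    simp [H, τ, Fb, Prod.sectR]
    exact (Category.id_comp _).symm

/-- Projecting the cylinder back to `I` is an equivalence. -/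
def eqv : (J.{u} × I) ≌ I where
  functor := CategoryTheory.Prod.snd _ _
  inverse := Prod.sectR (J.zero) I
  unitIso := NatIso.ofComponents
    (fun p => ⟨(⟨⟩, 𝟙 p.2), (⟨⟩, 𝟙 p.2), by cases p; exact Prod.ext rfl (Category.id_comp _), by cases p; exact Prod.ext rfl (Category.id_comp _)⟩)
    (by intros; exact Prod.ext rfl ((Category.comp_id _).trans (Category.id_comp _).symm))
  counitIso := Iso.refl _
  functor_unitIso_comp := by intros; exact Category.comp_id _

end Stmt1Aux

open Stmt1Aux in
/-- If a functor `γ : Cat ⥤ 𝒞` sends every equivalence of small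
categories to an isomorphism, then `γ` identifies naturally isomorphic functors:
for functors `F₀ F₁ : I ⥤ I'` admitting a natural isomorphism `F₀ ≅ F₁`, one has
`γ.map F₀ = γ.map F₁`. -/
theorem stmt1 {𝒞 : Type w} [Category.{z} 𝒞] (γ : Cat.{v, u} ⥤ 𝒞)
    (hγ : ∀ {I I' : Cat.{v, u}} (F : I ⟶ I'), (F.toFunctor : ↑I ⥤ ↑I').IsEquivalence → IsIso (γ.map F))
    {I I' : Cat.{v, u}} (F₀ F₁ : I ⟶ I')
    (h : Nonempty ((F₀.toFunctor : ↑I ⥤ ↑I') ≅ (F₁.toFunctor : ↑I ⥤ ↑I'))) :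
    γ.map F₀ = γ.map F₁ := by
  obtain ⟨e⟩ := h
  let JI : Cat.{v, u} := Cat.of (J.{u} × ↑I)
  let pr : JI ⟶ I := (CategoryTheory.Prod.snd _ _).toCatHom
  let i0 : I ⟶ JI := (Prod.sectR (J.zero) ↑I).toCatHom
  let i1 : I ⟶ JI := (Prod.sectR (J.one) ↑I).toCatHom
  let Hm : JI ⟶ I' := (H F₀.toFunctor F₁.toFunctor e).toCatHom
  have hpr : IsIso (γ.map pr) :=
    hγ pr ((eqv (I := ↑I)).isEquivalence_functor)
  have h0 : γ.map i0 ≫ γ.map pr = 𝟙 _ := by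
    rw [← γ.map_comp]
    have : i0 ≫ pr = 𝟙 I := rfl
    rw [this, γ.map_id]
  have h1 : γ.map i1 ≫ γ.map pr = 𝟙 _ := by
    rw [← γ.map_comp]
    have : i1 ≫ pr = 𝟙 I := rfl
    rw [this, γ.map_id]
  have hii : γ.map i0 = γ.map i1 := by
    have := h0.trans h1.symm
    exact (cancel_mono (γ.map pr)).1 this
  have e0 : i0 ≫ Hm = F₀ := Cat.Hom.ext (sect_H F₀.toFunctor F₁.toFunctor e J.zero)
  have e1 : i1 ≫ Hm = F₁ := Cat.Hom.ext (sect_H F₀.toFunctor F₁.toFunctor e J.one)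
  calc γ.map F₀ = γ.map (i0 ≫ Hm) := by rw [e0]
    _ = γ.map i0 ≫ γ.map Hm := γ.map_comp _ _
    _ = γ.map i1 ≫ γ.map Hm := by rw [hii]
    _ = γ.map (i1 ≫ Hm) := (γ.map_comp _ _).symm
    _ = γ.map F₁ := by rw [e1]
end

section
/- Let π : 𝒞 ⥤ I be a Grothendieck fibration and γ : 𝒞' ⥤ 𝒞 a functor. Then γ is a Grothendieck fibration if and only if all of the following hold: (i) π' = π ∘ γ : 𝒞' ⥤ I is a Grothendieck fibration; (ii) γ is cartesian over I, i.e. γ sends π'-cartesian morphisms to π-cartesian morphisms; (iii) for every object i of I the induced functor γ(i) : 𝒞'_i ⥤ 𝒞_i between the fibers over i is a Grothendieck fibration; (iv) for every morphism f : i ⟶ i' of I, choosing π-cartesian lifts of f to get a transition functor f* : 𝒞_{i'} ⥤ 𝒞_i and π'-cartesian lifts of f to get a transition functor f* : 𝒞'_{i'} ⥤ 𝒞'_i, and letting (f*)*𝒞'_i be the category of triples (c, c', α) with c in 𝒞_{i'}, c' in 𝒞'_i and α : f*(c) ≅ γ(i)(c') an isomorphism of 𝒞_i, regarded as fibered over 𝒞_{i'}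 by the first projection (a morphism of triples being cartesian over 𝒞_{i'} exactly when its 𝒞'_i-component is γ(i)-cartesian), the natural comparison functor 𝒞'_{i'} ⥤ (f*)*𝒞'_i — sending c' to (γ(i')(c'), f*(c'), the canonical isomorphism f*(γ(i')(c')) ≅ γ(i)(f*(c')) supplied by (ii)) — sends γ(i')-cartesian morphisms to morphisms whose 𝒞'_i-component is γ(i)-cartesian. -/
open CategoryTheory

namespace Paper

universe w v u v₁ u₁ v₂ u₂ v₃ u₃

variable {C : Type u₁} [Category.{v₁} C] {D : Type u₂} [Category.{v₂} D]
  {I : Type u₃} [Category.{v₃} I]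

/-- A morphism `φ : a ⟶ b` is cartesian with respect to `π : C ⥤ I`. -/
def IsCartesian (π : C ⥤ I) {a b : C} (φ : a ⟶ b) : Prop :=
  ∀ (a' : C) (φ' : a' ⟶ b) (h : π.obj a' = π.obj a),
    π.map φ' = eqToHom h ≫ π.map φ →
      ∃! ψ : a' ⟶ a, π.map ψ = eqToHom h ∧ ψ ≫ φ = φ'

/-- `π : C ⥤ I` is a prefibration: every morphism of `I` with prescribed target
admits a cartesian lift. -/
def IsPrefibration (π : C ⥤ I) : Prop :=
  ∀ (b : C) (i : I) (f : i ⟶ π.obj b),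
    ∃ (a : C) (φ : a ⟶ b) (h : π.obj a = i),
      IsCartesian π φ ∧ π.map φ = eqToHom h ≫ f

/-- `π : C ⥤ I` is a (Grothendieck) fibration: a prefibration such that the
composite of two cartesian morphisms is cartesian. -/
def IsFibration (π : C ⥤ I) : Prop :=
  IsPrefibration π ∧
    ∀ ⦃a b c : C⦄ (φ : a ⟶ b) (ψ : b ⟶ c),
      IsCartesian π φ → IsCartesian π ψ → IsCartesian π (φ ≫ ψ)

/-- The fiber of `π : C ⥤ I` over `i : I`. -/
def Fiber (π : C ⥤ I) (i : I) : Type u₁ := {c : C // π.obj c = i}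

instance fiberCategory (π : C ⥤ I) (i : I) : Category.{v₁} (Fiber π i) where
  Hom a b := {φ : a.1 ⟶ b.1 // π.map φ = eqToHom (a.2.trans b.2.symm)}
  id a := ⟨𝟙 a.1, by simp⟩
  comp f g := ⟨f.1 ≫ g.1, by rw [Functor.map_comp, f.2, g.2, eqToHom_trans]⟩
  id_comp f := Subtype.ext (Category.id_comp f.1)
  comp_id f := Subtype.ext (Category.comp_id f.1)
  assoc f g h := Subtype.ext (Category.assoc f.1 g.1 h.1)

/-- The inclusion of a fiber into the total category. -/
def fiberInclusion (π : C ⥤ I) (i : I) : Fiber π i ⥤ C where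
  obj a := a.1
  map f := f.1

/-- Transition-functor data for a fibration: a functor between fibers together
with the cartesian lifts exhibiting it as a transition functor along `f`. -/
structure TransitionData (π : C ⥤ I) {i i' : I} (f : i ⟶ i')
    (F : Fiber π i' ⥤ Fiber π i) where
  lift : ∀ c : Fiber π i', (F.obj c).1 ⟶ c.1
  cart : ∀ c, IsCartesian π (lift c)
  over' : ∀ c, π.map (lift c) = eqToHom (F.obj c).2 ≫ f ≫ eqToHom c.2.symm
  nat : ∀ {c d : Fiber π i'} (u : c ⟶ d), (F.map u).1 ≫ lift d = lift c ≫ u.1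

end Paper

namespace Paper

variable {C : Type u₁} [Category.{v₁} C] {C' : Type u₂} [Category.{v₂} C']
  {I : Type u₃} [Category.{v₃} I]

/-- The functor induced by `γ : 𝒞' ⥤ 𝒞` between the fibers over `i` of
`π' = γ ⋙ π` and of `π`. -/
def fiberFunctor (γ : C' ⥤ C) (π : C ⥤ I) (i : I) :
    Fiber (γ ⋙ π) i ⥤ Fiber π i where
  obj a := ⟨γ.obj a.1, a.2⟩
  map f := ⟨γ.map f.1, f.2⟩
  map_id a := Subtype.ext (γ.map_id a.1)
  map_comp f g := Subtype.ext (γ.map_comp f.1 g.1)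

section General

variable {A : Type u} [Category.{v} A] {B : Type u₁} [Category.{v₁} B] (P : A ⥤ B)

/-- Strong cartesianness: unique lifts over arbitrary factorizations in the base. -/
def IsStrongCartesian {a b : A} (φ : a ⟶ b) : Prop :=
  ∀ (z : A) (φ' : z ⟶ b) (g : P.obj z ⟶ P.obj a),
    g ≫ P.map φ = P.map φ' → ∃! ψ : z ⟶ a, P.map ψ = g ∧ ψ ≫ φ = φ'

theorem IsStrongCartesian.isCartesian {a b : A} {φ : a ⟶ b}
    (h : IsStrongCartesian P φ) : IsCartesian P φ :=
  fun z φ' hz hφ' => h z φ' (eqToHom hz) hφ'.symm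

theorem isCartesian_of_isIso {a b : A} (e : a ⟶ b) [IsIso e] : IsCartesian P e := by
  intro z φ' hz hφ'
  refine ⟨φ' ≫ inv e, ⟨?_, by simp⟩, ?_⟩
  · rw [P.map_comp, hφ', P.map_inv]; simp
  · rintro ψ ⟨h1, h2⟩; rw [← h2]; simp

/-- composing a "vertical iso" with a cartesian morphism yields a cartesian morphism -/
theorem isCartesian_comp_of_eqToHom {a' a b : A} (e : a' ⟶ a) [IsIso e]
    {h : P.obj a' = P.obj a} (he : P.map e = eqToHom h) {φ : a ⟶ b}
    (hφ : IsCartesian P φ) : IsCartesian P (e ≫ φ) := by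
  intro z φ' hz hφ'
  have hφ'2 : P.map φ' = eqToHom (hz.trans h) ≫ P.map φ := by
    rw [hφ', P.map_comp, he, ← Category.assoc, eqToHom_trans]
  obtain ⟨ρ, ⟨hρ1, hρ2⟩, hρu⟩ := hφ z φ' (hz.trans h) hφ'2
  refine ⟨ρ ≫ inv e, ⟨?_, ?_⟩, ?_⟩
  · rw [P.map_comp, hρ1, P.map_inv]
    have hinv : inv (P.map e) = eqToHom h.symm := by
      apply IsIso.inv_eq_of_hom_inv_id
      rw [he, eqToHom_trans, eqToHom_refl]
    rw [hinv, eqToHom_trans]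
  · rw [Category.assoc, IsIso.inv_hom_id_assoc, hρ2]
  · rintro ψ ⟨h1, h2⟩
    have : ψ ≫ e = ρ := by
      refine hρu (ψ ≫ e) ⟨?_, by simpa using h2⟩
      rw [P.map_comp, h1, he, eqToHom_trans]
    rw [← this]; simp

theorem exists_iso_of_cartesian {a a' b : A} {φ : a ⟶ b} {φ' : a' ⟶ b}
    (hφ : IsCartesian P φ) (hφ' : IsCartesian P φ') (h : P.obj a' = P.obj a)
    (hm : P.map φ' = eqToHom h ≫ P.map φ) :
    ∃ ψ : a' ⟶ a, IsIso ψ ∧ P.map ψ = eqToHom h ∧ ψ ≫ φ = φ' := by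
  obtain ⟨ψ, ⟨hψ1, hψ2⟩, _⟩ := hφ a' φ' h hm
  have hm' : P.map φ = eqToHom h.symm ≫ P.map φ' := by rw [hm, ← Category.assoc, eqToHom_trans, eqToHom_refl, Category.id_comp]
  obtain ⟨ψ', ⟨hψ'1, hψ'2⟩, _⟩ := hφ' a φ h.symm hm'
  obtain ⟨ι, _, hιu⟩ := hφ' a' φ' rfl (by simp)
  have h1 : ψ ≫ ψ' = 𝟙 a' := by
    have e1 := hιu (ψ ≫ ψ') ⟨by rw [P.map_comp, hψ1, hψ'1, eqToHom_trans, eqToHom_refl], by rw [Category.assoc, hψ'2, hψ2]⟩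
    have e2 := hιu (𝟙 a') ⟨by simp, by simp⟩
    rw [e1, e2]
  obtain ⟨ι₂, _, hι₂u⟩ := hφ a φ rfl (by simp)
  have h2 : ψ' ≫ ψ = 𝟙 a := by
    have e1 := hι₂u (ψ' ≫ ψ) ⟨by rw [P.map_comp, hψ'1, hψ1, eqToHom_trans, eqToHom_refl], by rw [Category.assoc, hψ2, hψ'2]⟩
    have e2 := hι₂u (𝟙 a) ⟨by simp, by simp⟩
    rw [e1, e2]
  exact ⟨ψ, ⟨ψ', h1, h2⟩, hψ1, hψ2⟩

theorem IsCartesian.strong (hP : IsFibration P) {a b : A} {φ : a ⟶ b}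
    (hφ : IsCartesian P φ) : IsStrongCartesian P φ := by
  intro z φ' g hg
  obtain ⟨x, χ, h, hχc, hχ⟩ := hP.1 a (P.obj z) g
  have hcomp : IsCartesian P (χ ≫ φ) := hP.2 χ φ hχc hφ
  have hm : P.map φ' = eqToHom h.symm ≫ P.map (χ ≫ φ) := by
    rw [P.map_comp, hχ, ← hg]; simp
  obtain ⟨u, ⟨hu1, hu2⟩, huu⟩ := hcomp z φ' h.symm hm
  refine ⟨u ≫ χ, ⟨?_, by rw [Category.assoc]; exact hu2⟩, ?_⟩
  · rw [P.map_comp, hu1, hχ, ← Category.assoc, eqToHom_trans, eqToHom_refl, Category.id_comp]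
  · rintro ψ ⟨h1, h2⟩
    have hmv : P.map ψ = eqToHom h.symm ≫ P.map χ := by rw [h1, hχ]; simp
    obtain ⟨v, ⟨hv1, hv2⟩, _⟩ := hχc z ψ h.symm hmv
    have : v = u := huu v ⟨hv1, by rw [← Category.assoc, hv2, h2]⟩
    rw [← hv2, this]

theorem isCartesian_of_comp_strong {a b c : A} {ψ : a ⟶ b} {φ : b ⟶ c}
    (hφ : IsStrongCartesian P φ) (hc : IsCartesian P (ψ ≫ φ)) : IsCartesian P ψ := by
  intro z φ' hz hφ'
  have hm : P.map (φ' ≫ φ) = eqToHom hz ≫ P.map (ψ ≫ φ) := by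
    simp [hφ']
  obtain ⟨ρ, ⟨hρ1, hρ2⟩, hρu⟩ := hc z (φ' ≫ φ) hz hm
  obtain ⟨w, hw, hwu⟩ := hφ z (φ' ≫ φ) (P.map φ') (P.map_comp _ _).symm
  have e1 : ρ ≫ ψ = φ' := by
    have h1 := hwu (ρ ≫ ψ) ⟨by rw [P.map_comp, hρ1, hφ'], by rw [Category.assoc]; exact hρ2⟩
    have h2 := hwu φ' ⟨rfl, rfl⟩
    rw [h1, h2]
  refine ⟨ρ, ⟨hρ1, e1⟩, ?_⟩
  rintro ρ' ⟨h1, h2⟩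
  exact hρu ρ' ⟨h1, by rw [← Category.assoc, h2]⟩

theorem Fiber.comp_val {i : B} {a b c : Fiber P i} (f : a ⟶ b) (g : b ⟶ c) :
    (f ≫ g).1 = f.1 ≫ g.1 := rfl

theorem Fiber.id_val {i : B} (a : Fiber P i) : (𝟙 a : a ⟶ a).1 = 𝟙 a.1 := rfl

theorem Fiber.eqToHom_val {i : B} {a b : Fiber P i} (h : a = b) :
    (eqToHom h : a ⟶ b).1 = eqToHom (congrArg Subtype.val h) := by
  subst h; rfl

theorem exists_transitionData (hP : IsFibration P) {i i' : B} (f : i ⟶ i') :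
    ∃ F : Fiber P i' ⥤ Fiber P i, Nonempty (TransitionData P f F) := by
  choose obj lift h cart over' using fun c : Fiber P i' => hP.1 c.1 i (f ≫ eqToHom c.2.symm)
  have key : ∀ {c d : Fiber P i'} (u : c ⟶ d),
      ∃! m : obj c ⟶ obj d, P.map m = eqToHom ((h c).trans (h d).symm) ∧
        m ≫ lift d = lift c ≫ u.1 := by
    intro c d u
    refine IsCartesian.strong P hP (cart d) (obj c) (lift c ≫ u.1)
      (eqToHom ((h c).trans (h d).symm)) ?_
    rw [over' d, P.map_comp, over' c, u.2]
    simp [eqToHom_trans]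
  refine ⟨{ obj := fun c => ⟨obj c, h c⟩,
            map := fun {c d} u => ⟨(key u).exists.choose, (key u).exists.choose_spec.1⟩,
            map_id := ?_, map_comp := ?_ },
          ⟨{ lift := fun c => lift c, cart := fun c => cart c,
             over' := fun c => over' c,
             nat := fun {c d} u => (key u).exists.choose_spec.2 }⟩⟩
  · intro c
    apply Subtype.ext
    show (key (𝟙 c)).exists.choose = 𝟙 (obj c)
    refine (key (𝟙 c)).unique
      ⟨(key (𝟙 c)).exists.choose_spec.1, (key (𝟙 c)).exists.choose_spec.2⟩
      ⟨by simp [eqToHom_trans], ?_⟩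
    show 𝟙 (obj c) ≫ lift c = lift c ≫ 𝟙 c.1
    simp
  · intro c d e u v
    apply Subtype.ext
    show (key (u ≫ v)).exists.choose = (key u).exists.choose ≫ (key v).exists.choose
    refine (key (u ≫ v)).unique
      ⟨(key (u ≫ v)).exists.choose_spec.1, (key (u ≫ v)).exists.choose_spec.2⟩
      ⟨?_, ?_⟩
    · rw [P.map_comp, (key u).exists.choose_spec.1, (key v).exists.choose_spec.1,
        eqToHom_trans]
    · show ((key u).exists.choose ≫ (key v).exists.choose) ≫ lift e = lift c ≫ (u.1 ≫ v.1)
      rw [Category.assoc, (key v).exists.choose_spec.2, ← Category.assoc,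
        (key u).exists.choose_spec.2, Category.assoc]

end General

section Gamma

variable (γ : C' ⥤ C) (π : C ⥤ I)

/-- A fiber morphism is cartesian for the fiber functor iff its component is
`γ`-cartesian. -/
theorem fiber_cart_iff {i : I} {a b : Fiber (γ ⋙ π) i} (u : a ⟶ b) :
    IsCartesian (fiberFunctor γ π i) u ↔ IsCartesian γ u.1 := by
  constructor
  · intro hcart z φ' hz hφ'
    have hz2 : (γ ⋙ π).obj z = i := by
      show π.obj (γ.obj z) = i
      rw [hz]; exact a.2
    have hu2 : π.map (γ.map u.1) = eqToHom (a.2.trans b.2.symm) := u.2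
    have hφ'v : (γ ⋙ π).map φ' = eqToHom (hz2.trans b.2.symm) := by
      show π.map (γ.map φ') = _
      rw [hφ', π.map_comp, eqToHom_map, hu2, eqToHom_trans]
    obtain ⟨psiF, ⟨hψ1, hψ2⟩, hψu⟩ := hcart ⟨z, hz2⟩ ⟨φ', hφ'v⟩ (Subtype.ext hz)
      (Subtype.ext (by rw [Fiber.comp_val]; erw [Fiber.eqToHom_val]; exact hφ'))
    refine ⟨psiF.1, ⟨?_, congrArg Subtype.val hψ2⟩, ?_⟩
    · have := congrArg Subtype.val hψ1
      erw [Fiber.eqToHom_val] at this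
      exact this
    · rintro ψ' ⟨h1, h2⟩
      have hψ'v : (γ ⋙ π).map ψ' = eqToHom (hz2.trans a.2.symm) := by
        show π.map (γ.map ψ') = _
        rw [h1, eqToHom_map]
      have := hψu ⟨ψ', hψ'v⟩
        ⟨Subtype.ext (by erw [Fiber.eqToHom_val]; exact h1), Subtype.ext h2⟩
      exact congrArg Subtype.val this
  · intro hcart zF phiF' hF hcond
    have hz : γ.obj zF.1 = γ.obj a.1 := congrArg Subtype.val hF
    have hφ' : γ.map phiF'.1 = eqToHom hz ≫ γ.map u.1 := by
      have := congrArg Subtype.val hcond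
      rw [Fiber.comp_val, Fiber.eqToHom_val] at this
      exact this
    obtain ⟨ψ, ⟨h1, h2⟩, hu⟩ := hcart zF.1 phiF'.1 hz hφ'
    have hψv : (γ ⋙ π).map ψ = eqToHom (zF.2.trans a.2.symm) := by
      show π.map (γ.map ψ) = _
      rw [h1, eqToHom_map]
    refine ⟨⟨ψ, hψv⟩, ⟨Subtype.ext (by rw [Fiber.eqToHom_val]; exact h1),
      Subtype.ext h2⟩, ?_⟩
    rintro psiF' ⟨g1, g2⟩
    apply Subtype.ext
    refine hu psiF'.1 ⟨?_, congrArg Subtype.val g2⟩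
    have := congrArg Subtype.val g1
    rw [Fiber.eqToHom_val] at this
    exact this

/-- If `χ` is `γ`-cartesian and `γ.map χ` is `π`-cartesian, then `χ` is
`(γ ⋙ π)`-cartesian. -/
theorem pi'_cart_of (hγ : IsFibration γ) {y b : C'} {χ : y ⟶ b}
    (hχγ : IsCartesian γ χ) (hγχ : IsCartesian π (γ.map χ)) :
    IsCartesian (γ ⋙ π) χ := by
  intro z φ' h hφ'
  obtain ⟨ρ, ⟨hρ1, hρ2⟩, hρu⟩ := hγχ (γ.obj z) (γ.map φ') h hφ'
  obtain ⟨ψ, ⟨hψ1, hψ2⟩, hψu⟩ := IsCartesian.strong γ hγ hχγ z φ' ρ hρ2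
  refine ⟨ψ, ⟨?_, hψ2⟩, ?_⟩
  · show π.map (γ.map ψ) = eqToHom h
    rw [hψ1, hρ1]
  · rintro ψ' ⟨h1, h2⟩
    have : γ.map ψ' = ρ := hρu (γ.map ψ') ⟨h1, by rw [← γ.map_comp, h2]⟩
    exact hψu ψ' ⟨this, h2⟩

/-- If `χ` is `(γ ⋙ π)`-cartesian and `γ.map χ` is `π`-cartesian, then `χ` is
`γ`-cartesian. -/
theorem gamma_cart_of {y b : C'} {χ : y ⟶ b}
    (hχ : IsCartesian (γ ⋙ π) χ) (hγχ : IsCartesian π (γ.map χ)) :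
    IsCartesian γ χ := by
  intro z φ' h hφ'
  have hz : (γ ⋙ π).obj z = (γ ⋙ π).obj y := congrArg π.obj h
  have hm : (γ ⋙ π).map φ' = eqToHom hz ≫ (γ ⋙ π).map χ := by
    show π.map (γ.map φ') = eqToHom hz ≫ π.map (γ.map χ)
    rw [hφ', π.map_comp, eqToHom_map]
  obtain ⟨ψ, ⟨h1, h2⟩, hu⟩ := hχ z φ' hz hm
  have hγψ : γ.map ψ = eqToHom h := by
    obtain ⟨ρ, _, hρu⟩ := hγχ (γ.obj z) (γ.map φ') hz hm
    have e1 := hρu (γ.map ψ) ⟨h1, by rw [← γ.map_comp, h2]⟩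
    have e2 := hρu (eqToHom h) ⟨by rw [eqToHom_map], hφ'.symm⟩
    rw [e1, e2]
  refine ⟨ψ, ⟨hγψ, h2⟩, ?_⟩
  rintro ψ' ⟨g1, g2⟩
  refine hu ψ' ⟨?_, g2⟩
  show π.map (γ.map ψ') = eqToHom hz
  rw [g1, eqToHom_map]

/-- If `χ` is `(γ ⋙ π)`-cartesian and `γ.map χ` is `π`-cartesian, and `π`,
`γ ⋙ π` are fibrations, then `χ` is strongly `γ`-cartesian. -/
theorem strong_gamma_cart_of (hπ : IsFibration π) (hπ' : IsFibration (γ ⋙ π))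
    {d b : C'} {χ : d ⟶ b} (hχ : IsCartesian (γ ⋙ π) χ)
    (hγχ : IsCartesian π (γ.map χ)) : IsStrongCartesian γ χ := by
  intro z φ' g hg
  have hπg : π.map g ≫ (γ ⋙ π).map χ = (γ ⋙ π).map φ' := by
    show π.map g ≫ π.map (γ.map χ) = π.map (γ.map φ')
    rw [← π.map_comp, hg]
  obtain ⟨ψ, ⟨hψ1, hψ2⟩, hψu⟩ := IsCartesian.strong (γ ⋙ π) hπ' hχ z φ' (π.map g) hπg
  have hγψ : γ.map ψ = g := by
    obtain ⟨ρ, _, hρu⟩ := IsCartesian.strong π hπ hγχ (γ.obj z) (γ.map φ') (π.map g) hπg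
    have e1 := hρu (γ.map ψ) ⟨hψ1, by rw [← γ.map_comp, hψ2]⟩
    have e2 := hρu g ⟨rfl, hg⟩
    rw [e1, e2]
  refine ⟨ψ, ⟨hγψ, hψ2⟩, ?_⟩
  rintro ψ' ⟨g1, g2⟩
  refine hψu ψ' ⟨?_, g2⟩
  show π.map (γ.map ψ') = π.map g
  rw [g1]

/-- If `φ` is `(γ ⋙ π)`-cartesian and `π`, `γ` are fibrations, then `γ.map φ`
is `π`-cartesian. -/
theorem gamma_map_cart (hπ : IsFibration π) (hγ : IsFibration γ)
    {a b : C'} {φ : a ⟶ b} (hφ : IsCartesian (γ ⋙ π) φ) :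
    IsCartesian π (γ.map φ) := by
  obtain ⟨x, φ₀, h₀, hφ₀c, hφ₀⟩ := hπ.1 (γ.obj b) ((γ ⋙ π).obj a) ((γ ⋙ π).map φ)
  obtain ⟨y, χ, h₁, hχγ, hχ⟩ := hγ.1 b x φ₀
  have hγχc : IsCartesian π (γ.map χ) := by
    rw [hχ]
    exact isCartesian_comp_of_eqToHom π (eqToHom h₁) (eqToHom_map π h₁) hφ₀c
  have hχπ' : IsCartesian (γ ⋙ π) χ := pi'_cart_of γ π hγ hχγ hγχc
  have h₂ : (γ ⋙ π).obj y = (γ ⋙ π).obj a := by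
    show π.obj (γ.obj y) = _
    rw [h₁]; exact h₀
  have hm : (γ ⋙ π).map φ = eqToHom h₂.symm ≫ (γ ⋙ π).map χ := by
    show π.map (γ.map φ) = eqToHom h₂.symm ≫ π.map (γ.map χ)
    rw [hχ, π.map_comp, eqToHom_map, hφ₀]
    simp [eqToHom_trans]
  obtain ⟨uiso, hiso, hu1, hu2⟩ := exists_iso_of_cartesian (γ ⋙ π) hχπ' hφ h₂.symm hm
  have hrw : γ.map φ = γ.map uiso ≫ γ.map χ := by rw [← γ.map_comp, hu2]
  rw [hrw]
  haveI := hiso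
  exact isCartesian_comp_of_eqToHom π (γ.map uiso) (h := h₂.symm) hu1 hγχc

/-- A vertical `γ`-cartesian morphism composed with a `(γ ⋙ π)`-cartesian
morphism whose `γ`-image is `π`-cartesian is `γ`-cartesian. -/
theorem cart_of_vert_comp (hπ : IsFibration π) (hπ' : IsFibration (γ ⋙ π))
    {a d b : C'} (u : a ⟶ d) (χ : d ⟶ b) (hv : (γ ⋙ π).obj a = (γ ⋙ π).obj d)
    (huv : (γ ⋙ π).map u = eqToHom hv) (huγ : IsCartesian γ u)
    (hχ : IsCartesian (γ ⋙ π) χ) (hγχ : IsCartesian π (γ.map χ)) :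
    IsCartesian γ (u ≫ χ) := by
  intro z φ' hz hφ'
  have hz' : (γ ⋙ π).obj z = (γ ⋙ π).obj a := congrArg π.obj hz
  have hπ'φ' : (γ ⋙ π).map φ' = eqToHom (hz'.trans hv) ≫ (γ ⋙ π).map χ := by
    show π.map (γ.map φ') = eqToHom (hz'.trans hv) ≫ π.map (γ.map χ)
    rw [hφ', γ.map_comp, π.map_comp, π.map_comp, eqToHom_map]
    rw [show π.map (γ.map u) = eqToHom hv from huv]
    rw [← Category.assoc, eqToHom_trans]
  obtain ⟨w, ⟨hw1, hw2⟩, hwu⟩ :=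
    IsCartesian.strong (γ ⋙ π) hπ' hχ z φ' (eqToHom (hz'.trans hv)) hπ'φ'.symm
  have hγw : γ.map w = eqToHom hz ≫ γ.map u := by
    obtain ⟨ρ, _, hρu⟩ := hγχ (γ.obj z) (γ.map φ') (hz'.trans hv) hπ'φ'
    have e1 := hρu (γ.map w) ⟨hw1, by rw [← γ.map_comp, hw2]⟩
    have e2 : eqToHom hz ≫ γ.map u = ρ := by
      refine hρu _ ⟨?_, ?_⟩
      · rw [π.map_comp, eqToHom_map]
        rw [show π.map (γ.map u) = eqToHom hv from huv, eqToHom_trans]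
      · rw [Category.assoc, ← γ.map_comp, ← hφ']
    rw [e1, e2]
  -- pass to the fiber over i := (γ ⋙ π).obj a
  let aF : Fiber (γ ⋙ π) ((γ ⋙ π).obj a) := ⟨a, rfl⟩
  let dF : Fiber (γ ⋙ π) ((γ ⋙ π).obj a) := ⟨d, hv.symm⟩
  let zF : Fiber (γ ⋙ π) ((γ ⋙ π).obj a) := ⟨z, hz'⟩
  let uF : aF ⟶ dF := ⟨u, huv⟩
  let wF : zF ⟶ dF := ⟨w, hw1⟩
  have hFu : IsCartesian (fiberFunctor γ π ((γ ⋙ π).obj a)) uF :=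
    (fiber_cart_iff γ π uF).2 huγ
  have hFh : (fiberFunctor γ π ((γ ⋙ π).obj a)).obj zF =
      (fiberFunctor γ π ((γ ⋙ π).obj a)).obj aF := Subtype.ext hz
  obtain ⟨psiF, ⟨hψ1, hψ2⟩, hψu⟩ := hFu zF wF hFh
    (Subtype.ext (by rw [Fiber.comp_val, Fiber.eqToHom_val]; exact hγw))
  refine ⟨psiF.1, ⟨?_, ?_⟩, ?_⟩
  · have := congrArg Subtype.val hψ1
    rw [Fiber.eqToHom_val] at this
    exact this
  · have hpu : psiF.1 ≫ u = w := congrArg Subtype.val hψ2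
    rw [← Category.assoc, hpu, hw2]
  · rintro ψ' ⟨g1, g2⟩
    have hψ'v : (γ ⋙ π).map ψ' = eqToHom hz' := by
      show π.map (γ.map ψ') = _
      rw [g1, eqToHom_map]
    have hw' : ψ' ≫ u = w := by
      refine hwu _ ⟨?_, ?_⟩
      · rw [(γ ⋙ π).map_comp, hψ'v]
        rw [show (γ ⋙ π).map u = eqToHom hv from huv, eqToHom_trans]
      · rw [Category.assoc]; exact g2
    have : (⟨ψ', hψ'v⟩ : zF ⟶ aF) = psiF := hψu _
      ⟨Subtype.ext (by rw [Fiber.eqToHom_val]; exact g1), Subtype.ext hw'⟩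
    exact congrArg Subtype.val this

end Gamma

/-- Let `π : 𝒞 ⥤ I` be a Grothendieck fibration and
`γ : 𝒞' ⥤ 𝒞` a functor. Then `γ` is a Grothendieck fibration if and only if:
(i) `π' = γ ⋙ π` is a Grothendieck fibration; (ii) `γ` sends `π'`-cartesian
morphisms to `π`-cartesian morphisms; (iii) for every `i` the induced functor
`γ(i) : 𝒞'_i ⥤ 𝒞_i` between fibers is a Grothendieck fibration; and (iv) for
every `f : i ⟶ i'` and every transition functor `f* : 𝒞'_{i'} ⥤ 𝒞'_i` of `π'`
obtained from `π'`-cartesian lifts of `f` (this is the `𝒞'_i`-component of the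
comparison functor `𝒞'_{i'} ⥤ (f*)*𝒞'_i`), `f*` sends `γ(i')`-cartesian
morphisms to `γ(i)`-cartesian morphisms. -/
theorem stmt2 (π : C ⥤ I) (hπ : IsFibration π) (γ : C' ⥤ C) :
    IsFibration γ ↔
      (IsFibration (γ ⋙ π) ∧
        (∀ {a b : C'} (φ : a ⟶ b),
          IsCartesian (γ ⋙ π) φ → IsCartesian π (γ.map φ)) ∧
        (∀ i : I, IsFibration (fiberFunctor γ π i)) ∧
        (∀ {i i' : I} (f : i ⟶ i')
          (F : Fiber (γ ⋙ π) i' ⥤ Fiber (γ ⋙ π) i)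
          (_ : TransitionData (γ ⋙ π) f F)
          {a b : Fiber (γ ⋙ π) i'} (u : a ⟶ b),
          IsCartesian (fiberFunctor γ π i') u →
            IsCartesian (fiberFunctor γ π i) (F.map u))) := by
  constructor
  · intro hγ
    have hii : ∀ {a b : C'} (φ : a ⟶ b),
        IsCartesian (γ ⋙ π) φ → IsCartesian π (γ.map φ) :=
      fun φ h => gamma_map_cart γ π hπ hγ h
    refine ⟨⟨?_, ?_⟩, @hii, ?_, ?_⟩
    · -- (i) prefibration
      intro b i f
      obtain ⟨x, φ₀, h₀, hφ₀c, hφ₀⟩ := hπ.1 (γ.obj b) i f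
      obtain ⟨y, χ, h₁, hχγ, hχ⟩ := hγ.1 b x φ₀
      have hγχc : IsCartesian π (γ.map χ) := by
        rw [hχ]
        exact isCartesian_comp_of_eqToHom π (eqToHom h₁) (eqToHom_map π h₁) hφ₀c
      refine ⟨y, χ, (show π.obj (γ.obj y) = i by rw [h₁, h₀]),
        pi'_cart_of γ π hγ hχγ hγχc, ?_⟩
      show π.map (γ.map χ) = _
      rw [hχ, π.map_comp, eqToHom_map, hφ₀, ← Category.assoc, eqToHom_trans]
    · -- (i) composition
      intro a b c φ ψ hφ hψ
      exact pi'_cart_of γ π hγ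
        (hγ.2 φ ψ (gamma_cart_of γ π hφ (hii φ hφ)) (gamma_cart_of γ π hψ (hii ψ hψ)))
        (by rw [γ.map_comp]; exact hπ.2 _ _ (hii φ hφ) (hii ψ hψ))
    · -- (iii)
      intro i
      constructor
      · intro b x g
        obtain ⟨a, χ, h, hχγ, hχ⟩ := hγ.1 b.1 x.1 g.1
        have ha : (γ ⋙ π).obj a = i := by
          show π.obj (γ.obj a) = i
          rw [h, x.2]
        have hχv : (γ ⋙ π).map χ = eqToHom (ha.trans b.2.symm) := by
          show π.map (γ.map χ) = _
          rw [hχ]; erw [π.map_comp]; rw [eqToHom_map]; erw [g.2, eqToHom_trans]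
        refine ⟨⟨a, ha⟩, ⟨χ, hχv⟩, Subtype.ext h, (fiber_cart_iff γ π _).2 hχγ, ?_⟩
        apply Subtype.ext
        rw [Fiber.comp_val]; erw [Fiber.eqToHom_val]
        exact hχ
      · intro a b c φ ψ hφ hψ
        exact (fiber_cart_iff γ π (φ ≫ ψ)).2
          (hγ.2 φ.1 ψ.1 ((fiber_cart_iff γ π φ).1 hφ) ((fiber_cart_iff γ π ψ).1 hψ))
    · -- (iv)
      intro i i' f F TD a b u hu
      have hla := TD.cart a
      have hlb := TD.cart b
      have hlaγ := gamma_cart_of γ π hla (hii _ hla)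
      have hlbγ := gamma_cart_of γ π hlb (hii _ hlb)
      have hcomp : IsCartesian γ (TD.lift a ≫ u.1) :=
        hγ.2 _ _ hlaγ ((fiber_cart_iff γ π u).1 hu)
      rw [← TD.nat u] at hcomp
      exact (fiber_cart_iff γ π (F.map u)).2
        (isCartesian_of_comp_strong γ (IsCartesian.strong γ hγ hlbγ) hcomp)
  · rintro ⟨h1, h2, h3, h4⟩
    constructor
    · -- prefibration of γ
      intro b x g
      obtain ⟨c, χ, hc, hχc, hχ⟩ := h1.1 b (π.obj x) (π.map g)
      have hγχ : IsCartesian π (γ.map χ) := h2 χ hχc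
      obtain ⟨v, ⟨hv1, hv2⟩, _⟩ := hγχ x g hc.symm
        (by rw [show π.map (γ.map χ) = eqToHom hc ≫ π.map g from hχ,
          ← Category.assoc, eqToHom_trans, eqToHom_refl, Category.id_comp])
      let cF : Fiber (γ ⋙ π) (π.obj x) := ⟨c, hc⟩
      let xF : Fiber π (π.obj x) := ⟨x, rfl⟩
      have hvv : π.map v = eqToHom (xF.2.trans
          (((fiberFunctor γ π (π.obj x)).obj cF).2.symm)) := hv1
      obtain ⟨aF, uF, hobj, huc, hmap⟩ := (h3 (π.obj x)).1 cF xF ⟨v, hvv⟩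
      refine ⟨aF.1, uF.1 ≫ χ, congrArg Subtype.val hobj, ?_, ?_⟩
      · exact cart_of_vert_comp γ π hπ h1 uF.1 χ (aF.2.trans cF.2.symm) uF.2
          ((fiber_cart_iff γ π uF).1 huc) hχc hγχ
      · have hmv : γ.map uF.1 = eqToHom (congrArg Subtype.val hobj) ≫ v := by
          have := congrArg Subtype.val hmap
          rw [Fiber.comp_val, Fiber.eqToHom_val] at this
          exact this
        rw [γ.map_comp]; erw [hmv, Category.assoc, hv2]; rfl
    · -- composition of γ-cartesian morphisms
      intro a b c φ₁ φ₂ hφ₁ hφ₂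
      obtain ⟨d₁, χ₁, hd₁, hχ₁c, hχ₁⟩ := h1.1 b ((γ ⋙ π).obj a) ((γ ⋙ π).map φ₁)
      obtain ⟨d₂, χ₂, hd₂, hχ₂c, hχ₂⟩ := h1.1 c ((γ ⋙ π).obj b) ((γ ⋙ π).map φ₂)
      obtain ⟨u₁, ⟨hu₁1, hu₁2⟩, _⟩ :=
        IsCartesian.strong (γ ⋙ π) h1 hχ₁c a φ₁ (eqToHom hd₁.symm)
          (by rw [hχ₁, ← Category.assoc, eqToHom_trans, eqToHom_refl, Category.id_comp])
      obtain ⟨u₂, ⟨hu₂1, hu₂2⟩, _⟩ :=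
        IsCartesian.strong (γ ⋙ π) h1 hχ₂c b φ₂ (eqToHom hd₂.symm)
          (by rw [hχ₂, ← Category.assoc, eqToHom_trans, eqToHom_refl, Category.id_comp])
      have hχ₁γ : IsCartesian π (γ.map χ₁) := h2 χ₁ hχ₁c
      have hχ₂γ : IsCartesian π (γ.map χ₂) := h2 χ₂ hχ₂c
      have hu₁γ : IsCartesian γ u₁ :=
        isCartesian_of_comp_strong γ (strong_gamma_cart_of γ π hπ h1 hχ₁c hχ₁γ)
          (by rw [hu₁2]; exact hφ₁)
      have hu₂γ : IsCartesian γ u₂ :=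
        isCartesian_of_comp_strong γ (strong_gamma_cart_of γ π hπ h1 hχ₂c hχ₂γ)
          (by rw [hu₂2]; exact hφ₂)
      obtain ⟨F, ⟨TD⟩⟩ := exists_transitionData (γ ⋙ π) h1 ((γ ⋙ π).map φ₁)
      let bF : Fiber (γ ⋙ π) ((γ ⋙ π).obj b) := ⟨b, rfl⟩
      let d₂F : Fiber (γ ⋙ π) ((γ ⋙ π).obj b) := ⟨d₂, hd₂⟩
      let u₂F : bF ⟶ d₂F := ⟨u₂, hu₂1⟩
      have hFu₂ : IsCartesian (fiberFunctor γ π ((γ ⋙ π).obj a)) (F.map u₂F) :=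
        h4 ((γ ⋙ π).map φ₁) F TD u₂F ((fiber_cart_iff γ π u₂F).2 hu₂γ)
      have hliftb := TD.cart bF
      have hcmp : (γ ⋙ π).map χ₁ =
          eqToHom (hd₁.trans (F.obj bF).2.symm) ≫ (γ ⋙ π).map (TD.lift bF) := by
        rw [TD.over' bF, hχ₁]
        simp [eqToHom_trans]
      obtain ⟨e, he_iso, he1, he2⟩ := exists_iso_of_cartesian (γ ⋙ π) hliftb hχ₁c
        (hd₁.trans (F.obj bF).2.symm) hcmp
      let aF : Fiber (γ ⋙ π) ((γ ⋙ π).obj a) := ⟨a, rfl⟩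
      let d₁F : Fiber (γ ⋙ π) ((γ ⋙ π).obj a) := ⟨d₁, hd₁⟩
      let u₁F : aF ⟶ d₁F := ⟨u₁, hu₁1⟩
      let eF : d₁F ⟶ F.obj bF := ⟨e, he1⟩
      haveI := he_iso
      haveI heFiso : IsIso eF := by
        refine ⟨⟨inv e, ?_⟩, ?_, ?_⟩
        · rw [Functor.map_inv]
          apply IsIso.inv_eq_of_hom_inv_id
          rw [he1, eqToHom_trans, eqToHom_refl]
        · exact Subtype.ext (by show e ≫ inv e = 𝟙 d₁; simp)
        · exact Subtype.ext (by show inv e ≫ e = 𝟙 (F.obj bF).1; simp)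
      have hvert : IsCartesian (fiberFunctor γ π ((γ ⋙ π).obj a))
          (u₁F ≫ eF ≫ F.map u₂F) :=
        (h3 _).2 u₁F (eF ≫ F.map u₂F) ((fiber_cart_iff γ π u₁F).2 hu₁γ)
          ((h3 _).2 eF (F.map u₂F)
            (isCartesian_of_isIso (fiberFunctor γ π ((γ ⋙ π).obj a)) eF) hFu₂)
      have hvγ : IsCartesian γ (u₁ ≫ e ≫ (F.map u₂F).1) :=
        (fiber_cart_iff γ π (u₁F ≫ eF ≫ F.map u₂F)).1 hvert
      have hw_cart : IsCartesian (γ ⋙ π) (TD.lift d₂F ≫ χ₂) :=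
        h1.2 _ _ (TD.cart d₂F) hχ₂c
      have hw_γ : IsCartesian π (γ.map (TD.lift d₂F ≫ χ₂)) := h2 _ hw_cart
      have hvtot : (γ ⋙ π).map (u₁ ≫ e ≫ (F.map u₂F).1) =
          eqToHom ((F.obj d₂F).2.symm :
            (γ ⋙ π).obj a = (γ ⋙ π).obj (F.obj d₂F).1) := by
        rw [(γ ⋙ π).map_comp, (γ ⋙ π).map_comp, hu₁1,
          show (γ ⋙ π).map e = eqToHom (hd₁.trans (F.obj bF).2.symm) from he1,
          show (γ ⋙ π).map (F.map u₂F).1 =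
            eqToHom ((F.obj bF).2.trans (F.obj d₂F).2.symm) from (F.map u₂F).2,
          eqToHom_trans, eqToHom_trans]
      have hfinal : IsCartesian γ ((u₁ ≫ e ≫ (F.map u₂F).1) ≫ (TD.lift d₂F ≫ χ₂)) :=
        cart_of_vert_comp γ π hπ h1 _ _ _ hvtot hvγ hw_cart hw_γ
      have hnat' : TD.lift bF ≫ u₂ ≫ χ₂ = (F.map u₂F).1 ≫ TD.lift d₂F ≫ χ₂ := by
        rw [← Category.assoc, ← TD.nat u₂F, Category.assoc]
      have hrw : φ₁ ≫ φ₂ = (u₁ ≫ e ≫ (F.map u₂F).1) ≫ (TD.lift d₂F ≫ χ₂) := by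
        conv_lhs => rw [← hu₁2, ← hu₂2, ← he2]
        simp only [Category.assoc]
        rw [hnat']
      rw [hrw]
      exact hfinal

end Paper
end

section
/- Let π : 𝒞 ⥤ I be a functor. For an object i of I, let i\𝒞 denote the right comma-fiber: the category of pairs (c, α) with c an object of 𝒞 and α : i ⟶ π(c) a morphism of I, morphisms (c, α) ⟶ (c', α') being morphisms g : c ⟶ c' in 𝒞 with π(g) ∘ α = α'; regard the fiber 𝒞_i as the full subcategory of i\𝒞 of pairs with α = id_i. Then π is a prefibration if and only if for every object i of I the inclusion 𝒞_i ⥤ i\𝒞 admits a right adjoint. -/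
open CategoryTheory

namespace Paper

variable {C : Type u₁} [Category.{v₁} C] {I : Type u₃} [Category.{v₃} I]

/-- The inclusion of the fiber `𝒞_i` into the right comma-fiber `i \ 𝒞`
(the category of structured arrows `i ⟶ π(c)`). -/
def fiberToComma (π : C ⥤ I) (i : I) : Fiber π i ⥤ StructuredArrow i π where
  obj a := StructuredArrow.mk (Y := a.1) (eqToHom a.2.symm)
  map {a b} φ := StructuredArrow.homMk φ.1 (by
    dsimp
    rw [φ.2, eqToHom_trans])
  map_id a := by
    apply StructuredArrow.hom_ext
    rfl
  map_comp f g := by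
    apply StructuredArrow.hom_ext
    rfl

/-- Helper: make an object of the fiber. -/
def Fiber.mk (π : C ⥤ I) (i : I) (c : C) (h : π.obj c = i) : Fiber π i := ⟨c, h⟩

/-- Helper: make a morphism of the fiber. -/
def Fiber.homMk (π : C ⥤ I) (i : I) {a b : Fiber π i} (ψ : a.1 ⟶ b.1)
    (hψ : π.map ψ = eqToHom (a.2.trans b.2.symm)) : a ⟶ b := ⟨ψ, hψ⟩

/-- A functor `π : 𝒞 ⥤ I` is a prefibration if and only if for
every object `i` of `I` the inclusion of the fiber `𝒞_i` into the right
comma-fiber `i \ 𝒞` admits a right adjoint. -/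
theorem stmt3 (π : C ⥤ I) :
    IsPrefibration π ↔ ∀ i : I, (fiberToComma π i).IsLeftAdjoint := by
  constructor
  · intro hpre i
    rw [isLeftAdjoint_iff_hasTerminal_costructuredArrow]
    intro B
    obtain ⟨a, φ, h, cart, over'⟩ := hpre B.right i B.hom
    have hε : (eqToHom h.symm : i ⟶ π.obj a) ≫ π.map φ = B.hom := by
      rw [over', eqToHom_trans_assoc, eqToHom_refl, Category.id_comp]
    have hT : Limits.IsTerminal
        (CostructuredArrow.mk (Y := Fiber.mk π i a h)
          (StructuredArrow.homMk φ hε) : CostructuredArrow (fiberToComma π i) B) := by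
      have key : ∀ s : CostructuredArrow (fiberToComma π i) B,
          ∃! ψ : s.left.1 ⟶ a, π.map ψ = eqToHom (s.left.2.trans h.symm) ∧
            ψ ≫ φ = s.hom.right := by
        intro s
        apply cart
        have hw : (eqToHom s.left.2.symm : i ⟶ π.obj s.left.1) ≫ π.map s.hom.right
            = B.hom := StructuredArrow.w s.hom
        rw [(eqToHom_comp_iff _ _ _).mp hw, over', eqToHom_trans_assoc]
      refine Limits.IsTerminal.ofUniqueHom
        (fun s => CostructuredArrow.homMk
          (Fiber.homMk π i (key s).exists.choose (key s).exists.choose_spec.1) ?_) ?_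
      · apply StructuredArrow.ext
        exact (key s).exists.choose_spec.2
      · intro s m
        apply CostructuredArrow.ext
        apply Subtype.ext
        refine ((key s).unique ⟨m.left.2, ?_⟩
          ⟨(key s).exists.choose_spec.1, (key s).exists.choose_spec.2⟩ :)
        exact congrArg CommaMorphism.right (CostructuredArrow.w m)
    exact hT.hasTerminal
  · intro hadj b i f
    have hht := (isLeftAdjoint_iff_hasTerminal_costructuredArrow).mp (hadj i)
      (StructuredArrow.mk f)
    obtain ⟨T, ⟨hT⟩⟩ : ∃ T : CostructuredArrow (fiberToComma π i) (StructuredArrow.mk f),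
        Nonempty (Limits.IsTerminal T) := ⟨_, ⟨Limits.terminalIsTerminal⟩⟩
    have hw : (eqToHom T.left.2.symm : i ⟶ π.obj T.left.1) ≫ π.map T.hom.right = f :=
      StructuredArrow.w T.hom
    have hover : π.map T.hom.right = eqToHom T.left.2 ≫ f := by
      exact (eqToHom_comp_iff _ _ _).mp hw
    refine ⟨T.left.1, T.hom.right, T.left.2, ?_, hover⟩
    intro a' φ' h2 hφ'
    have hs : (eqToHom (h2.trans T.left.2).symm : i ⟶ π.obj a') ≫ π.map φ' = f := by
      rw [hφ', eqToHom_trans_assoc]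
      exact hw
    let s : CostructuredArrow (fiberToComma π i) (StructuredArrow.mk f) :=
      CostructuredArrow.mk (Y := Fiber.mk π i a' (h2.trans T.left.2))
        (StructuredArrow.homMk φ' hs)
    have hu := hT.from s
    refine ⟨hu.left.1, ⟨hu.left.2, ?_⟩, ?_⟩
    · exact congrArg CommaMorphism.right (CostructuredArrow.w hu)
    · intro ψ hψ
      let m : s ⟶ T := CostructuredArrow.homMk
        (Fiber.homMk π i (a := Fiber.mk π i a' (h2.trans T.left.2)) (b := T.left) ψ hψ.1)
        (StructuredArrow.ext _ _ hψ.2)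
      have : m = hu := hT.hom_ext m hu
      exact congrArg (fun g : s ⟶ T => g.left.1) this

end Paper
end

section
/- Let ⟨L, R⟩ be a factorization system on a category I: L and R are classes of morphisms each containing all identities and closed under composition, L ∩ R equals the class of isomorphisms, and every morphism f : i ⟶ i' factors as f = r ∘ l with l ∈ L and r ∈ R, uniquely up to unique isomorphism (for any two such factorizations there is a unique isomorphism between the middle objects making both triangles commute). Let Arrowᴸ(I) ⊆ Arrow(I) be the full subcategory of the arrow category spanned by arrows in L. Then the source functor s : Arrowᴸ(I) ⥤ I is a Grothendieck fibration, and a morphism (g, g') of Arrowᴸ(I) is s-cartesian if and only if g' ∈ R. Dually, the target functor t : Arrowᴿ(I) ⥤ I on the full subcategory of arrows in R is a Grothendieck opfibration, and a morphism (g, g') is t-cocartesian if and only if g ∈ L. -/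
open CategoryTheory

namespace Paper

/-- A factorization system `⟨L, R⟩` on a category `I`: both classes contain the
identities and are closed under composition, `L ∩ R` is exactly the class of
isomorphisms, and every morphism factors as a morphism of `L` followed by a
morphism of `R`, uniquely up to unique isomorphism. -/
structure FactorizationSystem (I : Type u₃) [Category.{v₃} I]
    (L R : MorphismProperty I) : Prop where
  id_mem_left : ∀ X : I, L (𝟙 X)
  comp_mem_left : ∀ {X Y Z : I} (f : X ⟶ Y) (g : Y ⟶ Z), L f → L g → L (f ≫ g)
  id_mem_right : ∀ X : I, R (𝟙 X)
  comp_mem_right : ∀ {X Y Z : I} (f : X ⟶ Y) (g : Y ⟶ Z), R f → R g → R (f ≫ g)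
  inter_iso : ∀ {X Y : I} (f : X ⟶ Y), (L f ∧ R f) ↔ IsIso f
  fac : ∀ {X Y : I} (f : X ⟶ Y),
    ∃ (M : I) (l : X ⟶ M) (r : M ⟶ Y), L l ∧ R r ∧ l ≫ r = f
  uniq : ∀ {X Y : I} (f : X ⟶ Y) (M M' : I) (l : X ⟶ M) (r : M ⟶ Y)
    (l' : X ⟶ M') (r' : M' ⟶ Y), L l → R r → L l' → R r' →
    l ≫ r = f → l' ≫ r' = f →
    ∃! e : M ≅ M', l ≫ e.hom = l' ∧ e.hom ≫ r' = r

end Paper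


namespace Paper

variable {I : Type u₃} [Category.{v₃} I]

lemma FactorizationSystem.orth {L R : MorphismProperty I}
    (hLR : FactorizationSystem I L R)
    {A B C D : I} {l : A ⟶ B} {r : C ⟶ D} (u : A ⟶ C) (v : B ⟶ D)
    (hl : L l) (hr : R r) (sq : u ≫ r = l ≫ v) :
    ∃! d : B ⟶ C, l ≫ d = u ∧ d ≫ r = v := by
  obtain ⟨M, lu, ru, hlu, hru, hu⟩ := hLR.fac u
  obtain ⟨N, lv, rv, hlv, hrv, hv⟩ := hLR.fac v
  obtain ⟨θ, ⟨hθ1, hθ2⟩, θuniq⟩ := hLR.uniq (u ≫ r) M N lu (ru ≫ r) (l ≫ lv) rv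
    hlu (hLR.comp_mem_right _ _ hru hr) (hLR.comp_mem_left _ _ hl hlv) hrv
    (by rw [← hu, Category.assoc]) (by rw [Category.assoc, hv, sq])
  refine ⟨lv ≫ θ.inv ≫ ru, ⟨?_, ?_⟩, ?_⟩
  · calc l ≫ lv ≫ θ.inv ≫ ru = (l ≫ lv) ≫ θ.inv ≫ ru := by simp
      _ = (lu ≫ θ.hom) ≫ θ.inv ≫ ru := by rw [hθ1]
      _ = lu ≫ ru := by simp
      _ = u := hu
  · calc (lv ≫ θ.inv ≫ ru) ≫ r = lv ≫ θ.inv ≫ (ru ≫ r) := by simp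
      _ = lv ≫ θ.inv ≫ (θ.hom ≫ rv) := by rw [← hθ2]
      _ = lv ≫ rv := by simp
      _ = v := hv
  · rintro d' ⟨hd1, hd2⟩
    obtain ⟨P, ld, rd, hld, hrd, hd⟩ := hLR.fac d'
    obtain ⟨α, ⟨hα1, hα2⟩, -⟩ := hLR.uniq u M P lu ru (l ≫ ld) rd hlu hru
      (hLR.comp_mem_left _ _ hl hld) hrd hu (by rw [Category.assoc, hd, hd1])
    obtain ⟨β, ⟨hβ1, hβ2⟩, -⟩ := hLR.uniq v P N ld (rd ≫ r) lv rv hld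
      (hLR.comp_mem_right _ _ hrd hr) hlv hrv (by rw [← Category.assoc, hd, hd2]) hv
    have hαβ : α ≪≫ β = θ := θuniq (α ≪≫ β)
      ⟨by rw [Iso.trans_hom, ← Category.assoc, hα1, Category.assoc, hβ1],
       by rw [Iso.trans_hom, Category.assoc, hβ2, ← Category.assoc, hα2]⟩
    have h1 : ld = lv ≫ β.inv := by rw [← hβ1]; simp
    have h2 : rd = α.inv ≫ ru := by rw [← hα2]; simp
    rw [← hd, h1, h2, ← hαβ, Iso.trans_inv]
    simp

def arrP (L : MorphismProperty I) : ObjectProperty (Arrow I) := fun f => L f.hom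

section LSide
variable {L R : MorphismProperty I}

abbrev piL (L : MorphismProperty I) : ObjectProperty.FullSubcategory (arrP L) ⥤ I :=
  ObjectProperty.ι (arrP L) ⋙ Arrow.leftFunc

lemma cart_of_right (hLR : FactorizationSystem I L R) {X Y : ObjectProperty.FullSubcategory (arrP L)}
    (φ : X ⟶ Y) (hR : R φ.hom.right) : IsCartesian (piL L) φ := by
  intro X' φ' h hφ'
  have h' : X'.obj.left = X.obj.left := h
  replace hφ' : φ'.hom.left = eqToHom h' ≫ φ.hom.left := hφ'
  have wφ : φ.hom.left ≫ Y.obj.hom = X.obj.hom ≫ φ.hom.right := Arrow.w φ.hom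
  have wφ' : φ'.hom.left ≫ Y.obj.hom = X'.obj.hom ≫ φ'.hom.right := Arrow.w φ'.hom
  obtain ⟨d, ⟨hd1, hd2⟩, duniq⟩ := hLR.orth (l := X'.obj.hom) (r := φ.hom.right)
      (eqToHom h' ≫ X.obj.hom) φ'.hom.right X'.property hR
      (by simp only [Category.assoc]; rw [← wφ, ← Category.assoc, ← hφ', wφ'])
  refine ⟨ObjectProperty.homMk (Arrow.homMk (f := X'.obj) (g := X.obj) (u := eqToHom h') (v := d) hd1.symm),
    ⟨rfl, ?_⟩, ?_⟩
  · apply ObjectProperty.hom_ext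
    apply CommaMorphism.ext
    · exact hφ'.symm
    · exact hd2
  · rintro ψ' ⟨h1, h2⟩
    replace h1 : ψ'.hom.left = eqToHom h' := h1
    have wψ' : ψ'.hom.left ≫ X.obj.hom = X'.obj.hom ≫ ψ'.hom.right := Arrow.w ψ'.hom
    have hr2 : ψ'.hom.right ≫ φ.hom.right = φ'.hom.right := congrArg (fun f => f.hom.right) h2
    have : ψ'.hom.right = d := duniq ψ'.hom.right ⟨by rw [← wψ', h1], hr2⟩
    exact ObjectProperty.hom_ext _ (CommaMorphism.ext h1 this)

lemma right_of_cart (hLR : FactorizationSystem I L R) {X Y : ObjectProperty.FullSubcategory (arrP L)}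
    (φ : X ⟶ Y) (hc : IsCartesian (piL L) φ) : R φ.hom.right := by
  obtain ⟨M, l, r, hl, hr, hcomp⟩ := hLR.fac φ.hom.right
  have wφ : φ.hom.left ≫ Y.obj.hom = X.obj.hom ≫ φ.hom.right := Arrow.w φ.hom
  set X'' : ObjectProperty.FullSubcategory (arrP L) :=
    ⟨Arrow.mk (X.obj.hom ≫ l), hLR.comp_mem_left _ _ X.property hl⟩ with hX''
  let φ' : X'' ⟶ Y := ObjectProperty.homMk <| Arrow.homMk (f := X''.obj) (g := Y.obj) (u := φ.hom.left) (v := r)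
    (by dsimp only [X'', Arrow.mk_hom]; rw [wφ, ← hcomp, Category.assoc])
  let χ : X ⟶ X'' := ObjectProperty.homMk <| Arrow.homMk (f := X.obj) (g := X''.obj) (u := 𝟙 X.obj.left) (v := l)
    (by dsimp only [X'', Arrow.mk_hom]; rw [Category.id_comp])
  have hχφ' : χ ≫ φ' = φ := by
    apply ObjectProperty.hom_ext
    apply CommaMorphism.ext
    · exact Category.id_comp φ.hom.left
    · exact hcomp
  obtain ⟨ψ, ⟨hψl, hψc⟩, -⟩ := hc X'' φ' rfl (Category.id_comp _).symm
  replace hψl : ψ.hom.left = eqToHom rfl := hψl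
  obtain ⟨ψ₀, -, uniq₀⟩ := hc X φ rfl (by simp)
  have e1 : χ ≫ ψ = 𝟙 X := by
    have c1 := uniq₀ (χ ≫ ψ) ⟨by show (𝟙 X.obj.left) ≫ ψ.hom.left = _; rw [hψl]; simp; rfl,
      by rw [Category.assoc, hψc, hχφ']⟩
    have c2 := uniq₀ (𝟙 X) ⟨by simp, by simp⟩
    rw [c1, c2]
  have e2 : ψ ≫ χ = 𝟙 X'' := by
    have hcart' : IsCartesian (piL L) φ' := cart_of_right hLR φ' hr
    obtain ⟨ψ₁, -, uniq₁⟩ := hcart' X'' φ' rfl (by simp)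
    have c1 := uniq₁ (ψ ≫ χ) ⟨by show ψ.hom.left ≫ (𝟙 X.obj.left) = _; rw [hψl]; simp; rfl,
      by rw [Category.assoc, hχφ', hψc]⟩
    have c2 := uniq₁ (𝟙 X'') ⟨by simp, by simp⟩
    rw [c1, c2]
  have hinv1 : l ≫ ψ.hom.right = 𝟙 X.obj.right := congrArg (fun f => f.hom.right) e1
  have hinv2 : ψ.hom.right ≫ l = 𝟙 M := congrArg (fun f => f.hom.right) e2
  have : IsIso l := ⟨ψ.hom.right, hinv1, hinv2⟩
  have hlR : R l := ((hLR.inter_iso l).2 this).2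
  rw [← hcomp]
  exact hLR.comp_mem_right _ _ hlR hr

end LSide

section RSide
variable {L R : MorphismProperty I}

abbrev piR (R : MorphismProperty I) :
    (ObjectProperty.FullSubcategory (arrP R))ᵒᵖ ⥤ Iᵒᵖ :=
  (ObjectProperty.ι (arrP R) ⋙ Arrow.rightFunc).op

lemma cocart_of_left (hLR : FactorizationSystem I L R)
    {a b : (ObjectProperty.FullSubcategory (arrP R))ᵒᵖ}
    (η : a ⟶ b) (hL : L η.unop.hom.left) : IsCartesian (piR R) η := by
  intro a' φ' h hφ'
  -- unop data
  have e : a.unop.obj.right = a'.unop.obj.right := (congrArg Opposite.unop h).symm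
  have hχ : φ'.unop.hom.right = η.unop.hom.right ≫ eqToHom e := by
    have := congrArg Quiver.Hom.unop hφ'
    simp [eqToHom_unop, Functor.op_map] at this; exact this
  have wχ : φ'.unop.hom.left ≫ a'.unop.obj.hom = b.unop.obj.hom ≫ φ'.unop.hom.right :=
    Arrow.w φ'.unop.hom
  have wη : η.unop.hom.left ≫ a.unop.obj.hom = b.unop.obj.hom ≫ η.unop.hom.right :=
    Arrow.w η.unop.hom
  obtain ⟨d, ⟨hd1, hd2⟩, duniq⟩ := hLR.orth (l := η.unop.hom.left) (r := a'.unop.obj.hom)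
      φ'.unop.hom.left (a.unop.obj.hom ≫ eqToHom e) hL a'.unop.property
      (by rw [wχ, hχ, ← Category.assoc, ← wη, Category.assoc])
  let ω : a.unop ⟶ a'.unop := ObjectProperty.homMk <| Arrow.homMk (f := a.unop.obj) (g := a'.unop.obj)
    (u := d) (v := eqToHom e) hd2
  refine ⟨ω.op, ⟨?_, ?_⟩, ?_⟩
  · show (eqToHom e).op = eqToHom h
    rw [eqToHom_op]
    rfl
  · apply Quiver.Hom.unop_inj
    apply ObjectProperty.hom_ext
    apply CommaMorphism.ext
    · exact hd1
    · exact hχ.symm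
  · rintro ψ' ⟨h1, h2⟩
    have hr' : ψ'.unop.hom.right = eqToHom e := by
      have := congrArg Quiver.Hom.unop h1
      simp [eqToHom_unop, Functor.op_map] at this; exact this
    have wψ' : ψ'.unop.hom.left ≫ a'.unop.obj.hom = a.unop.obj.hom ≫ ψ'.unop.hom.right :=
      Arrow.w ψ'.unop.hom
    have hl' : ψ'.unop.hom.left = d := by
      apply duniq
      constructor
      · exact congrArg (fun f => f.hom.left) (congrArg Quiver.Hom.unop h2)
      · rw [wψ', hr']
    apply Quiver.Hom.unop_inj
    exact ObjectProperty.hom_ext _ (CommaMorphism.ext hl' hr')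

lemma left_of_cocart (hLR : FactorizationSystem I L R)
    {a b : (ObjectProperty.FullSubcategory (arrP R))ᵒᵖ}
    (η : a ⟶ b) (hc : IsCartesian (piR R) η) : L η.unop.hom.left := by
  obtain ⟨M, l, r, hl, hr, hcomp⟩ := hLR.fac η.unop.hom.left
  have wη : η.unop.hom.left ≫ a.unop.obj.hom = b.unop.obj.hom ≫ η.unop.hom.right :=
    Arrow.w η.unop.hom
  set Z : ObjectProperty.FullSubcategory (arrP R) :=
    ⟨Arrow.mk (r ≫ a.unop.obj.hom), hLR.comp_mem_right _ _ hr a.unop.property⟩ with hZ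
  let χ : b.unop ⟶ Z := ObjectProperty.homMk <| Arrow.homMk (f := b.unop.obj) (g := Z.obj)
    (u := l) (v := η.unop.hom.right) (by dsimp only [Z, Arrow.mk_hom]; rw [← Category.assoc, hcomp, wη])
  let ξ : Z ⟶ a.unop := ObjectProperty.homMk <| Arrow.homMk (f := Z.obj) (g := a.unop.obj)
    (u := r) (v := 𝟙 a.unop.obj.right) (by dsimp only [Z, Arrow.mk_hom]; exact (Category.comp_id _).symm)
  obtain ⟨ψ, ⟨hψ1, hψ2⟩, -⟩ := hc (Opposite.op Z) χ.op rfl (Category.id_comp _).symm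
  set ω := ψ.unop with hω
  have hωr : ω.hom.right = 𝟙 a.unop.obj.right := by
    have := congrArg Quiver.Hom.unop hψ1
    simp [eqToHom_unop, Functor.op_map] at this; exact this
  have hφω : η.unop ≫ ω = χ := congrArg Quiver.Hom.unop hψ2
  have hχξ : χ ≫ ξ = η.unop := by
    apply ObjectProperty.hom_ext
    apply CommaMorphism.ext
    · exact hcomp
    · exact Category.comp_id _
  obtain ⟨ψ₀, -, uniq₀⟩ := hc a η rfl (by simp)
  have e1 : ω ≫ ξ = 𝟙 a.unop := by
    have c1 := uniq₀ ((ω ≫ ξ).op) ⟨by show (ω.hom.right ≫ 𝟙 _).op = _; rw [hωr]; simp; rfl,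
      by apply Quiver.Hom.unop_inj; show η.unop ≫ ω ≫ ξ = η.unop;
         rw [← Category.assoc, hφω, hχξ]⟩
    have c2 := uniq₀ (𝟙 a) ⟨by simp, by simp⟩
    have := c1.trans c2.symm
    have := congrArg Quiver.Hom.unop this
    simpa using this
  have e2 : ξ ≫ ω = 𝟙 Z := by
    have hcart' : IsCartesian (piR R) χ.op := cocart_of_left hLR χ.op hl
    obtain ⟨ψ₁, -, uniq₁⟩ := hcart' (Opposite.op Z) χ.op rfl (by simp)
    have c1 := uniq₁ ((ξ ≫ ω).op) ⟨by show (𝟙 _ ≫ ω.hom.right).op = _; rw [hωr]; simp; rfl,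
      by apply Quiver.Hom.unop_inj; show χ ≫ ξ ≫ ω = χ;
         rw [← Category.assoc, hχξ, hφω]⟩
    have c2 := uniq₁ (𝟙 (Opposite.op Z)) ⟨by simp, by simp⟩
    have := c1.trans c2.symm
    have := congrArg Quiver.Hom.unop this
    simpa using this
  have hinv1 : ω.hom.left ≫ r = 𝟙 a.unop.obj.left := congrArg (fun f => f.hom.left) e1
  have hinv2 : r ≫ ω.hom.left = 𝟙 M := congrArg (fun f => f.hom.left) e2
  have : IsIso r := ⟨ω.hom.left, hinv2, hinv1⟩
  have hrL : L r := ((hLR.inter_iso r).2 this).1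
  rw [← hcomp]
  exact hLR.comp_mem_left _ _ hl hrL

end RSide

end Paper

namespace Paper

variable {I : Type u₃} [Category.{v₃} I]

/-- For a factorization system `⟨L, R⟩` on `I`, the source
functor `s : Arrowᴸ(I) ⥤ I` is a Grothendieck fibration, with a morphism
`s`-cartesian if and only if its target component lies in `R`; dually, the
target functor `t : Arrowᴿ(I) ⥤ I` is a Grothendieck opfibration, with a
morphism `t`-cocartesian if and only if its source component lies in `L`. -/
theorem stmt7 (L R : MorphismProperty I) (hLR : FactorizationSystem I L R) :
    (IsFibration
        (ObjectProperty.ι (fun f : Arrow I => L f.hom) ⋙ Arrow.leftFunc) ∧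
      ∀ {X Y : ObjectProperty.FullSubcategory (fun f : Arrow I => L f.hom)} (φ : X ⟶ Y),
        IsCartesian
          (ObjectProperty.ι (fun f : Arrow I => L f.hom) ⋙ Arrow.leftFunc) φ ↔
        R φ.hom.right) ∧
    (IsFibration
        (ObjectProperty.ι (fun f : Arrow I => R f.hom) ⋙ Arrow.rightFunc).op ∧
      ∀ {X Y : ObjectProperty.FullSubcategory (fun f : Arrow I => R f.hom)} (φ : X ⟶ Y),
        IsCartesian
          (ObjectProperty.ι (fun f : Arrow I => R f.hom) ⋙ Arrow.rightFunc).op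
          φ.op ↔
        L φ.hom.left) := by
  constructor
  · constructor
    · constructor
      · -- prefibration
        intro b i f
        obtain ⟨M, lf, rf, hlf, hrf, hc⟩ := hLR.fac (f ≫ b.obj.hom)
        exact ⟨⟨Arrow.mk lf, hlf⟩,
          ObjectProperty.homMk (Arrow.homMk (f := Arrow.mk lf) (g := b.obj) (u := f) (v := rf) hc.symm), rfl,
          cart_of_right hLR _ hrf, by exact (Category.id_comp _).symm⟩
      · -- composition of cartesian morphisms
        intro x y z φ ψ hφ hψ
        exact cart_of_right hLR _
          (hLR.comp_mem_right _ _ (right_of_cart hLR φ hφ) (right_of_cart hLR ψ hψ))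
    · intro X Y φ
      exact ⟨fun hc => right_of_cart hLR φ hc, fun hr => cart_of_right hLR φ hr⟩
  · constructor
    · constructor
      · -- prefibration (op side)
        intro b i f
        obtain ⟨M, lg, rg, hlg, hrg, hc⟩ := hLR.fac (b.unop.obj.hom ≫ f.unop)
        exact ⟨Opposite.op ⟨Arrow.mk rg, hrg⟩,
          (ObjectProperty.homMk (Arrow.homMk (f := b.unop.obj) (g := Arrow.mk rg) (u := lg) (v := f.unop) hc)).op,
          rfl, cocart_of_left hLR _ (by exact hlg), by exact (Category.id_comp _).symm⟩
      · -- composition of cartesian morphisms (op side)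
        intro x y z φ ψ hφ hψ
        exact cocart_of_left hLR _
          (hLR.comp_mem_left _ _ (left_of_cocart hLR ψ hψ) (left_of_cocart hLR φ hφ))
    · intro X Y φ
      exact ⟨fun hc => left_of_cocart hLR φ.op hc, fun hl => cocart_of_left hLR φ.op hl⟩


end Paper
end

section
/- Let ⟨L, R⟩ be a factorization system on a category I (L, R classes of morphisms containing the identities and closed under composition, L ∩ R = isomorphisms, every morphism factoring as a morphism in L followed by a morphism in R uniquely up to unique isomorphism), and let π : I' ⥤ I be a Grothendieck fibration. Define classes of morphisms of I': L' consists of the morphisms f with π(f) ∈ L, and R' consists of the morphisms f with π(f) ∈ R that are π-cartesian. Then ⟨L', R'⟩ is a factorization system on I'. -/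
open CategoryTheory

namespace Paper

variable {I : Type u₃} [Category.{v₃} I] {I' : Type u₁} [Category.{v₁} I']

/-- Isomorphisms are cartesian. -/
lemma isCartesian_of_isIso_s8 (π : I' ⥤ I) {a b : I'} (f : a ⟶ b) [IsIso f] :
    IsCartesian π f := by
  intro a' φ' h hφ'
  refine ⟨φ' ≫ inv f, ⟨?_, by simp⟩, ?_⟩
  · rw [π.map_comp, hφ', π.map_inv]
    simp
  · rintro ψ ⟨h1, h2⟩
    rw [← h2]; simp

/-- In a fibration, cartesian morphisms satisfy the strong universal property:
they lift arbitrary morphisms, not just vertical ones. -/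
lemma strongCartesian {π : I' ⥤ I} (hπ : IsFibration π) {a b : I'} {φ : a ⟶ b}
    (hφ : IsCartesian π φ) {X : I'} (f : X ⟶ b) (g : π.obj X ⟶ π.obj a)
    (hg : g ≫ π.map φ = π.map f) :
    ∃! ψ : X ⟶ a, π.map ψ = g ∧ ψ ≫ φ = f := by
  obtain ⟨c, χ, h, hχcart, hχmap⟩ := hπ.1 a (π.obj X) g
  have hcart := hπ.2 χ φ hχcart hφ
  have hmap : π.map (χ ≫ φ) = eqToHom h ≫ π.map f := by
    rw [π.map_comp, hχmap]; simp [hg]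
  obtain ⟨ζ, ⟨hζ1, hζ2⟩, hζu⟩ := hcart X f h.symm (by rw [hmap]; simp)
  refine ⟨ζ ≫ χ, ⟨?_, by rw [Category.assoc]; exact hζ2⟩, ?_⟩
  · rw [π.map_comp, hζ1, hχmap]; simp
  · rintro ψ ⟨h1, h2⟩
    obtain ⟨ζ', ⟨hz1, hz2⟩, hzu⟩ := hχcart X ψ h.symm (by rw [h1, hχmap]; simp)
    have hzζ : ζ' = ζ := hζu ζ' ⟨hz1, by rw [← Category.assoc, hz2, h2]⟩
    rw [← hz2, hzζ]

/-- A factorization system `⟨L, R⟩` on `I` lifts along a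
Grothendieck fibration `π : I' ⥤ I` to the factorization system `⟨L', R'⟩` on
`I'`, where `L'` consists of the morphisms whose image lies in `L`, and `R'` of
the `π`-cartesian morphisms whose image lies in `R`. -/
theorem stmt8 (L R : MorphismProperty I) (hLR : FactorizationSystem I L R)
    (π : I' ⥤ I) (hπ : IsFibration π) :
    FactorizationSystem I'
      (fun _ _ f => L (π.map f))
      (fun _ _ f => R (π.map f) ∧ IsCartesian π f) := by
  constructor
  · intro X; simpa using hLR.id_mem_left (π.obj X)
  · intro X Y Z f g hf hg
    rw [π.map_comp]; exact hLR.comp_mem_left _ _ hf hg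
  · intro X
    exact ⟨by simpa using hLR.id_mem_right (π.obj X),
      isCartesian_of_isIso_s8 π (𝟙 X)⟩
  · intro X Y Z f g hf hg
    refine ⟨by rw [π.map_comp]; exact hLR.comp_mem_right _ _ hf.1 hg.1,
      hπ.2 f g hf.2 hg.2⟩
  · intro X Y f
    constructor
    · rintro ⟨hL, hR, hcart⟩
      have hiso : IsIso (π.map f) := (hLR.inter_iso (π.map f)).1 ⟨hL, hR⟩
      obtain ⟨g, ⟨hg1, hg2⟩, hgu⟩ :=
        strongCartesian hπ hcart (𝟙 Y) (inv (π.map f)) (by simp)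
      obtain ⟨k, ⟨hk1, hk2⟩, hku⟩ :=
        strongCartesian hπ hcart f (𝟙 _) (by simp)
      have h1 : f ≫ g = 𝟙 X := by
        have e1 : f ≫ g = k := hku (f ≫ g)
          ⟨by rw [π.map_comp, hg1]; simp,
           by rw [Category.assoc, hg2]; simp⟩
        have e2 : 𝟙 X = k := hku (𝟙 X) ⟨by simp, by simp⟩
        rw [e1, ← e2]
      exact ⟨g, h1, hg2⟩
    · intro hiso
      have : IsIso (π.map f) := inferInstance
      obtain ⟨hL, hR⟩ := (hLR.inter_iso (π.map f)).2 this
      exact ⟨hL, hR, isCartesian_of_isIso_s8 π f⟩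
  · intro X Y f
    obtain ⟨M, l, r, hl, hr, hlr⟩ := hLR.fac (π.map f)
    obtain ⟨a, φ, h, hφcart, hφmap⟩ := hπ.1 Y M r
    obtain ⟨ψ, ⟨hψ1, hψ2⟩, _⟩ :=
      strongCartesian hπ hφcart f (l ≫ eqToHom h.symm)
        (by rw [Category.assoc, hφmap]; simp [hlr])
    refine ⟨a, ψ, φ, ?_, ⟨?_, hφcart⟩, hψ2⟩
    · rw [hψ1]
      exact hLR.comp_mem_left _ _ hl
        ((hLR.inter_iso _).2 inferInstance).1
    · rw [hφmap]
      exact hLR.comp_mem_right _ _ ((hLR.inter_iso _).2 inferInstance).2 hr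
  · intro X Y f M M' l r l' r' hl hr hl' hr' hf hf'
    obtain ⟨eb, ⟨he1, he2⟩, hebu⟩ := hLR.uniq (π.map f) (π.obj M) (π.obj M')
      (π.map l) (π.map r) (π.map l') (π.map r') hl hr.1 hl' hr'.1
      (by rw [← π.map_comp, hf]) (by rw [← π.map_comp, hf'])
    obtain ⟨e₁, ⟨he₁m, he₁c⟩, he₁u⟩ := strongCartesian hπ hr'.2 r eb.hom he2
    obtain ⟨e₂, ⟨he₂m, he₂c⟩, he₂u⟩ := strongCartesian hπ hr.2 r' eb.inv
      (by rw [← he2]; simp)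
    obtain ⟨k, _, hku⟩ := strongCartesian hπ hr.2 r (𝟙 _) (by simp)
    obtain ⟨k', _, hk'u⟩ := strongCartesian hπ hr'.2 r' (𝟙 _) (by simp)
    have h12 : e₁ ≫ e₂ = 𝟙 M := by
      have a1 : e₁ ≫ e₂ = k := hku (e₁ ≫ e₂)
        ⟨by rw [π.map_comp, he₁m, he₂m]; simp,
         by rw [Category.assoc, he₂c]; exact he₁c⟩
      have a2 : 𝟙 M = k := hku (𝟙 M) ⟨by simp, by simp⟩
      rw [a1, ← a2]
    have h21 : e₂ ≫ e₁ = 𝟙 M' := by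
      have a1 : e₂ ≫ e₁ = k' := hk'u (e₂ ≫ e₁)
        ⟨by rw [π.map_comp, he₁m, he₂m]; simp,
         by rw [Category.assoc, he₁c]; exact he₂c⟩
      have a2 : 𝟙 M' = k' := hk'u (𝟙 M') ⟨by simp, by simp⟩
      rw [a1, ← a2]
    obtain ⟨w, _, hwu⟩ := strongCartesian hπ hr'.2 f (π.map l')
      (by rw [← π.map_comp, hf'])
    have hle : l ≫ e₁ = l' := by
      have a1 : l ≫ e₁ = w := hwu (l ≫ e₁)
        ⟨by rw [π.map_comp, he₁m, he1],
         by rw [Category.assoc, he₁c, hf]⟩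
      have a2 : l' = w := hwu l' ⟨rfl, hf'⟩
      rw [a1, ← a2]
    refine ⟨⟨e₁, e₂, h12, h21⟩, ⟨hle, he₁c⟩, ?_⟩
    rintro e' ⟨hc1, hc2⟩
    have hmapiso : π.mapIso e' = eb := hebu (π.mapIso e')
      ⟨by rw [Functor.mapIso_hom, ← π.map_comp, hc1],
       by rw [Functor.mapIso_hom, ← π.map_comp, hc2]⟩
    have hhom : e'.hom = e₁ := he₁u e'.hom
      ⟨by rw [← Functor.mapIso_hom, hmapiso], hc2⟩
    exact Iso.ext hhom

end Paper
end

section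
/- Let π₀ : 𝒞 ⥤ I and π₁ : 𝒞' ⥤ I be functors, and suppose π₁ is a Grothendieck fibration. Then every functor over I from 𝒞 to 𝒞' — that is, every pair (γ, α) of a functor γ : 𝒞 ⥤ 𝒞' and a natural isomorphism α : π₁ ∘ γ ≅ π₀ — is isomorphic over I to a strict functor: there exist a functor γ' : 𝒞 ⥤ 𝒞' with π₁ ∘ γ' = π₀ and a natural isomorphism β : γ ≅ γ' such that for every object c of 𝒞 one has π₁(β_c) = α_c. Moreover (γ', β) is unique up to unique isomorphism: for any two such pairs (γ'₁, β₁) and (γ'₂, β₂) there is a unique natural isomorphism η : γ'₁ ≅ γ'₂ with π₁(η_c) = id for all c and η ∘ β₁ = β₂. The same statement holds when π₁ is a Grothendieck opfibration. -/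
open CategoryTheory

namespace Paper

variable {C : Type u₁} [Category.{v₁} C] {D : Type u₂} [Category.{v₂} D]
  {I : Type u₃} [Category.{v₃} I]

/-- A cartesian morphism over an isomorphism is an isomorphism (for a fibration). -/
theorem isIso_of_isCartesian (π : D ⥤ I) (h : IsFibration π)
    {a b : D} (φ : a ⟶ b) (hc : IsCartesian π φ) [IsIso (π.map φ)] : IsIso φ := by
  obtain ⟨e, χ, h', hχcart, hχover⟩ := h.1 a (π.obj b) (inv (π.map φ))
  have hcomp : IsCartesian π (χ ≫ φ) := h.2 χ φ hχcart hc
  have hπcomp : π.map (χ ≫ φ) = eqToHom h' := by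
    simp [hχover]
  obtain ⟨ψ, ⟨hψ₁, hψ₂⟩, -⟩ := hcomp b (𝟙 b) h'.symm (by simp [hπcomp])
  have hψ₂' : ψ ≫ χ ≫ φ = 𝟙 b := by simpa using hψ₂
  have hsec : (ψ ≫ χ) ≫ φ = 𝟙 b := by simpa using hψ₂'
  have hret : φ ≫ ψ ≫ χ = 𝟙 a := by
    obtain ⟨ρ, -, hu⟩ := hc a φ rfl (by simp)
    have h1 : φ ≫ ψ ≫ χ = ρ := hu _ ⟨by simp [hψ₁, hχover], by simp [hψ₂']⟩
    have h2 : 𝟙 a = ρ := hu _ ⟨by simp, by simp⟩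
    rw [h1, ← h2]
  exact ⟨ψ ≫ χ, hret, hsec⟩

/-- Existence of a strictification, for a fibration. -/
theorem exists_strict (π₀ : C ⥤ I) (π₁ : D ⥤ I) (h : IsFibration π₁)
    (γ : C ⥤ D) (α : γ ⋙ π₁ ≅ π₀) :
    ∃ (γ' : C ⥤ D) (hs : γ' ⋙ π₁ = π₀) (β : γ ≅ γ'),
      ∀ c : C, π₁.map (β.hom.app c) =
        α.hom.app c ≫ eqToHom (Functor.congr_obj hs c).symm := by
  choose a φ he hcart hover using fun c => h.1 (γ.obj c) (π₀.obj c) (α.inv.app c)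
  have hiso : ∀ c, IsIso (φ c) := by
    intro c
    have : IsIso (π₁.map (φ c)) := by rw [hover c]; infer_instance
    exact isIso_of_isCartesian π₁ h (φ c) (hcart c)
  haveI := hiso
  have hinv : ∀ c, π₁.map (inv (φ c)) = α.hom.app c ≫ eqToHom (he c).symm := by
    intro c
    have hh : π₁.map (φ c) ≫ (α.hom.app c ≫ eqToHom (he c).symm) = 𝟙 _ := by
      rw [hover c]; simp
    rw [Functor.map_inv]
    exact IsIso.inv_eq_of_hom_inv_id hh
  let γ' : C ⥤ D :=
    { obj := a
      map := fun {c c'} u => φ c ≫ γ.map u ≫ inv (φ c')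
      map_id := by intro c; simp
      map_comp := by intro c c' c'' u v; simp }
  have hπmap : ∀ {c c' : C} (u : c ⟶ c'),
      π₁.map (γ'.map u) = eqToHom (he c) ≫ π₀.map u ≫ eqToHom (he c').symm := by
    intro c c' u
    have hnat : α.inv.app c ≫ π₁.map (γ.map u) = π₀.map u ≫ α.inv.app c' :=
      (α.inv.naturality u).symm
    show π₁.map (φ c ≫ γ.map u ≫ inv (φ c')) = _
    rw [Functor.map_comp, Functor.map_comp, hover c, hinv c', Category.assoc,
      reassoc_of% hnat]
    simp
  have hs : γ' ⋙ π₁ = π₀ := CategoryTheory.Functor.ext he (fun c c' u => hπmap u)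
  refine ⟨γ', hs, NatIso.ofComponents (fun c => (asIso (φ c)).symm) ?_, ?_⟩
  · intro c c' u
    show γ.map u ≫ inv (φ c') = inv (φ c) ≫ φ c ≫ γ.map u ≫ inv (φ c')
    simp
  · intro c
    simpa using hinv c

/-- **Statement 11.** If `π₁ : 𝒞' ⥤ I` is a Grothendieck fibration (or an
opfibration), then every functor over `I` from `π₀ : 𝒞 ⥤ I` to `π₁` — a pair of
a functor `γ` with a natural isomorphism `α : γ ⋙ π₁ ≅ π₀` — is isomorphic over
`I` to a strict functor, uniquely up to unique isomorphism. -/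
theorem stmt11 (π₀ : C ⥤ I) (π₁ : D ⥤ I)
    (hπ₁ : IsFibration π₁ ∨ IsFibration π₁.op)
    (γ : C ⥤ D) (α : γ ⋙ π₁ ≅ π₀) :
    (∃ (γ' : C ⥤ D) (hs : γ' ⋙ π₁ = π₀) (β : γ ≅ γ'),
      ∀ c : C, π₁.map (β.hom.app c) =
        α.hom.app c ≫ eqToHom (Functor.congr_obj hs c).symm) ∧
    (∀ (γ'₁ γ'₂ : C ⥤ D) (hs₁ : γ'₁ ⋙ π₁ = π₀) (hs₂ : γ'₂ ⋙ π₁ = π₀)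
      (β₁ : γ ≅ γ'₁) (β₂ : γ ≅ γ'₂),
      (∀ c : C, π₁.map (β₁.hom.app c) =
        α.hom.app c ≫ eqToHom (Functor.congr_obj hs₁ c).symm) →
      (∀ c : C, π₁.map (β₂.hom.app c) =
        α.hom.app c ≫ eqToHom (Functor.congr_obj hs₂ c).symm) →
      ∃! η : γ'₁ ≅ γ'₂,
        (∀ c : C, π₁.map (η.hom.app c) =
          eqToHom ((Functor.congr_obj hs₁ c).trans (Functor.congr_obj hs₂ c).symm)) ∧
        β₁ ≪≫ η = β₂) := by
  constructor
  · rcases hπ₁ with h | h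
    · exact exists_strict π₀ π₁ h γ α
    · -- opfibration case: transfer through `op`.
      obtain ⟨δ, hs, β, hβ⟩ := exists_strict π₀.op π₁.op h γ.op
        (NatIso.op α.symm : γ.op ⋙ π₁.op ≅ π₀.op)
      have hs' : δ.unop ⋙ π₁ = π₀ := congrArg Functor.unop hs
      refine ⟨δ.unop, hs', NatIso.ofComponents
        (fun c => ((β.app (Opposite.op c)).unop).symm) ?_, ?_⟩
      · intro c c' u
        exact (congrArg Quiver.Hom.unop (β.inv.naturality u.op)).symm
      · intro c
        have h1 := hβ (Opposite.op c)
        have h5 : π₁.map ((β.hom.app (Opposite.op c)).unop) =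
            eqToHom (Functor.congr_obj hs' c) ≫ α.inv.app c := by
          have h6 := congrArg Quiver.Hom.unop h1
          simpa [NatIso.op, NatTrans.op, eqToHom_unop] using h6
        have hb2 : π₁.map ((β.inv.app (Opposite.op c)).unop) ≫
            π₁.map ((β.hom.app (Opposite.op c)).unop) = 𝟙 _ := by
          rw [← CategoryTheory.Functor.map_comp, ← unop_comp, Iso.hom_inv_id_app]
          simp
        have h7 : π₁.map ((β.hom.app (Opposite.op c)).unop) ≫
            (α.hom.app c ≫ eqToHom (Functor.congr_obj hs' c).symm) = 𝟙 _ := by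
          rw [h5]; simp
        show π₁.map ((β.inv.app (Opposite.op c)).unop) = _
        calc π₁.map ((β.inv.app (Opposite.op c)).unop)
            = π₁.map ((β.inv.app (Opposite.op c)).unop) ≫
              (π₁.map ((β.hom.app (Opposite.op c)).unop) ≫
                (α.hom.app c ≫ eqToHom (Functor.congr_obj hs' c).symm)) := by
              rw [h7, Category.comp_id]
          _ = (π₁.map ((β.inv.app (Opposite.op c)).unop) ≫
                π₁.map ((β.hom.app (Opposite.op c)).unop)) ≫
                (α.hom.app c ≫ eqToHom (Functor.congr_obj hs' c).symm) := by
              rw [Category.assoc]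
          _ = α.hom.app c ≫ eqToHom (Functor.congr_obj hs' c).symm := by
              rw [hb2, Category.id_comp]
  · intro γ'₁ γ'₂ hs₁ hs₂ β₁ β₂ hc₁ hc₂
    refine ⟨β₁.symm ≪≫ β₂, ⟨?_, ?_⟩, ?_⟩
    · intro c
      have h5 : π₁.map (β₁.inv.app c) ≫ π₁.map (β₁.hom.app c) = 𝟙 _ := by
        rw [← CategoryTheory.Functor.map_comp, Iso.inv_hom_id_app, CategoryTheory.Functor.map_id]
      have h6 : π₁.map (β₁.hom.app c) ≫
          (eqToHom (Functor.congr_obj hs₁ c) ≫ α.inv.app c) = 𝟙 _ := by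
        rw [hc₁ c]; simp
      have hinv : π₁.map (β₁.inv.app c) =
          eqToHom (Functor.congr_obj hs₁ c) ≫ α.inv.app c := by
        calc π₁.map (β₁.inv.app c)
            = π₁.map (β₁.inv.app c) ≫ (π₁.map (β₁.hom.app c) ≫
              (eqToHom (Functor.congr_obj hs₁ c) ≫ α.inv.app c)) := by
              rw [h6, Category.comp_id]
          _ = (π₁.map (β₁.inv.app c) ≫ π₁.map (β₁.hom.app c)) ≫
              (eqToHom (Functor.congr_obj hs₁ c) ≫ α.inv.app c) := by
              rw [Category.assoc]
          _ = _ := by rw [h5, Category.id_comp]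
      show π₁.map (β₁.inv.app c ≫ β₂.hom.app c) = _
      rw [Functor.map_comp, hinv, hc₂ c]
      simp
    · ext c
      simp
    · rintro η ⟨-, hη⟩
      ext c
      have := congrArg (fun t => t.hom.app c) hη
      simp only [Iso.trans_hom, NatTrans.comp_app] at this
      simp only [Iso.trans_hom, Iso.symm_hom, NatTrans.comp_app]
      rw [← this]
      simp

end Paper
end

section
/- Let eq be the category whose objects are pairs ([n], e) of an object [n] of the simplex category Δ and an arbitrary function e : [n] → {0, 1}, and whose morphisms ([n], e) ⟶ ([m], e') are the monotone maps f : [n] ⟶ [m] with e' ∘ f = e. For l ∈ {0, 1}, say a morphism f is l-special if f restricts to a bijection e⁻¹(l) → e'⁻¹(l). Then every morphism of eq factors uniquely as a 0-special morphism followed by a 1-special morphism, and also uniquely as a 1-special morphism followed by a 0-special morphism; that is, the classes of 0-special and of 1-special maps are each closed under composition and contain the identities, and they form a factorization system on eq in either order. -/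
open CategoryTheory

namespace Paper

/-- The category `eq`: objects are pairs of an object `[n]` of the simplex
category and a function `e : [n] → {0,1}`; morphisms are the monotone maps
compatible with the colourings. -/
structure EqCat where
  obj : SimplexCategory
  col : Fin (obj.len + 1) → Bool

instance : Category EqCat where
  Hom a b := {f : a.obj ⟶ b.obj // ∀ i, b.col (f.toOrderHom i) = a.col i}
  id a := ⟨𝟙 a.obj, fun i => rfl⟩
  comp {a b c} f g := ⟨f.1 ≫ g.1, fun i =>
    (g.2 (f.1.toOrderHom i)).trans (f.2 i)⟩
  id_comp f := Subtype.ext (Category.id_comp f.1)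
  comp_id f := Subtype.ext (Category.comp_id f.1)
  assoc f g h := Subtype.ext (Category.assoc f.1 g.1 h.1)

/-- A morphism of `eq` is `l`-special (for `l ∈ {0,1}`) if it restricts to a
bijection between the preimages of `l` under the colourings. -/
def LSpecial (l : Bool) {a b : EqCat} (f : a ⟶ b) : Prop :=
  Function.Bijective
    (fun x : {i : Fin (a.obj.len + 1) // a.col i = l} =>
      (⟨f.1.toOrderHom x.1, by rw [f.2, x.2]⟩ : {j : Fin (b.obj.len + 1) // b.col j = l}))

namespace FS

lemma bnot_of_ne {x c : Bool} (h : x ≠ c) : x = !c := by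
  cases c <;> cases x <;> simp_all

lemma hom_ext {a b : EqCat} {f g : a ⟶ b}
    (h : ∀ i, f.1.toOrderHom i = g.1.toOrderHom i) : f = g :=
  Subtype.ext (SimplexCategory.Hom.ext _ _ (OrderHom.ext _ _ (funext h)))

section Construction

variable (c : Bool) {a b : EqCat} (f : a ⟶ b)

def Mid (c : Bool) {a b : EqCat} (_f : a ⟶ b) : Type :=
  {i : Fin (a.obj.len + 1) // a.col i = c} ⊕ {j : Fin (b.obj.len + 1) // b.col j = !c}

instance : Fintype (Mid c f) := by unfold Mid; infer_instance

def emb : Mid c f → Fin (b.obj.len + 1) ×ₗ Fin (a.obj.len + 1)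
  | .inl i => toLex (f.1.toOrderHom i.1, i.1)
  | .inr j => toLex (j.1, 0)

lemma emb_inj : Function.Injective (emb c f) := by
  rintro (⟨i, hi⟩ | ⟨j, hj⟩) (⟨i', hi'⟩ | ⟨j', hj'⟩) h <;>
    simp only [emb, toLex_inj, Prod.mk.injEq] at h
  · exact congrArg Sum.inl (Subtype.ext h.2)
  · exfalso; have := f.2 i; rw [h.1, hj'] at this; rw [hi] at this
    exact (Bool.not_ne_self c) this
  · exfalso; have := f.2 i'; rw [← h.1, hj] at this; rw [hi'] at this
    exact (Bool.not_ne_self c) this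
  · exact congrArg Sum.inr (Subtype.ext h.1)

noncomputable instance : LinearOrder (Mid c f) :=
  LinearOrder.lift' (emb c f) (emb_inj c f)

lemma le_def {x y : Mid c f} : x ≤ y ↔ emb c f x ≤ emb c f y := Iff.rfl

lemma card_pos : 0 < Fintype.card (Mid c f) := by
  rw [Fintype.card_pos_iff]
  by_cases h : a.col 0 = c
  · exact ⟨Sum.inl ⟨0, h⟩⟩
  · exact ⟨Sum.inr ⟨f.1.toOrderHom 0, by rw [f.2]; exact bnot_of_ne h⟩⟩

noncomputable def eIso : Fin ((Fintype.card (Mid c f) - 1) + 1) ≃o Mid c f :=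
  monoEquivOfFin _ (by have := card_pos c f; omega)

noncomputable def midObj : EqCat where
  obj := SimplexCategory.mk (Fintype.card (Mid c f) - 1)
  col x := Sum.elim (fun _ => c) (fun _ => !c) (eIso c f x)

def gT (i : Fin (a.obj.len + 1)) : Mid c f :=
  if h : a.col i = c then Sum.inl ⟨i, h⟩
  else Sum.inr ⟨f.1.toOrderHom i, by rw [f.2]; exact bnot_of_ne h⟩

lemma gT_mono : Monotone (gT c f) := by
  intro i i' hii
  have hf : f.1.toOrderHom i ≤ f.1.toOrderHom i' := f.1.toOrderHom.monotone hii
  have e1 : ∀ k (hk : a.col k = c), gT c f k = Sum.inl ⟨k, hk⟩ := fun k hk => dif_pos hk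
  have e2 : ∀ k (hk : ¬ a.col k = c), gT c f k =
      Sum.inr ⟨f.1.toOrderHom k, by rw [f.2]; exact bnot_of_ne hk⟩ := fun k hk => dif_neg hk
  rw [le_def]
  by_cases h1 : a.col i = c <;> by_cases h2 : a.col i' = c <;>
    simp only [e1, e2, h1, h2, emb, not_false_eq_true]
  · exact Prod.Lex.le_iff.mpr (hf.lt_or_eq.imp id fun e => ⟨e, hii⟩)
  · have hne : f.1.toOrderHom i ≠ f.1.toOrderHom i' :=
      fun e => h2 (by rw [← f.2 i', ← e, f.2 i, h1])
    exact Prod.Lex.le_iff.mpr (Or.inl (lt_of_le_of_ne hf hne))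
  · have hne : f.1.toOrderHom i ≠ f.1.toOrderHom i' :=
      fun e => h1 (by rw [← f.2 i, e, f.2 i', h2])
    exact Prod.Lex.le_iff.mpr (Or.inl (lt_of_le_of_ne hf hne))
  · exact Prod.Lex.le_iff.mpr (hf.lt_or_eq.imp id fun e => ⟨e, le_refl _⟩)

def hT : Mid c f → Fin (b.obj.len + 1)
  | .inl i => f.1.toOrderHom i.1
  | .inr j => j.1

lemma hT_mono : Monotone (hT c f) := by
  rintro (⟨i, hi⟩ | ⟨j, hj⟩) (⟨i', hi'⟩ | ⟨j', hj'⟩) hxy <;>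
    replace hxy := (le_def c f).mp hxy <;>
    simp only [emb] at hxy <;>
    rcases Prod.Lex.le_iff.mp hxy with h | ⟨h, _⟩ <;>
    simp only [hT] <;> first | exact le_of_lt h | exact le_of_eq h

noncomputable def gHom : a ⟶ midObj c f :=
  ⟨SimplexCategory.Hom.mk
    ⟨fun i => (eIso c f).symm (gT c f i),
     ((eIso c f).symm.monotone).comp (gT_mono c f)⟩, by
    intro i
    show Sum.elim _ _ ((eIso c f) ((eIso c f).symm (gT c f i))) = a.col i
    rw [OrderIso.apply_symm_apply]
    by_cases h : a.col i = c
    · rw [show gT c f i = Sum.inl ⟨i, h⟩ from dif_pos h]; simpa using h.symm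
    · rw [show gT c f i = Sum.inr ⟨f.1.toOrderHom i, by rw [f.2]; exact bnot_of_ne h⟩ from
        dif_neg h]; simpa using (bnot_of_ne h).symm⟩

noncomputable def hHom : midObj c f ⟶ b :=
  ⟨SimplexCategory.Hom.mk
    ⟨fun x => hT c f (eIso c f x),
     (hT_mono c f).comp (eIso c f).monotone⟩, by
    intro x
    show b.col (hT c f (eIso c f x)) = Sum.elim _ _ (eIso c f x)
    rcases hx : eIso c f x with ⟨i, hi⟩ | ⟨j, hj⟩
    · simpa [hT, f.2] using hi
    · simpa [hT] using hj⟩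

lemma g_comp_h : gHom c f ≫ hHom c f = f := by
  apply hom_ext
  intro i
  show hT c f ((eIso c f) ((eIso c f).symm (gT c f i))) = f.1.toOrderHom i
  rw [OrderIso.apply_symm_apply]
  by_cases h : a.col i = c
  · rw [show gT c f i = Sum.inl ⟨i, h⟩ from dif_pos h]; rfl
  · rw [show gT c f i = Sum.inr ⟨f.1.toOrderHom i, by rw [f.2]; exact bnot_of_ne h⟩ from
      dif_neg h]; rfl

lemma gHom_special : LSpecial c (gHom c f) := by
  constructor
  · rintro ⟨i, hi⟩ ⟨i', hi'⟩ h
    have h1 : (eIso c f).symm (gT c f i) = (eIso c f).symm (gT c f i') :=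
      congrArg Subtype.val h
    have h2 : gT c f i = gT c f i' := (eIso c f).symm.injective h1
    rw [show gT c f i = Sum.inl ⟨i, hi⟩ from dif_pos hi,
      show gT c f i' = Sum.inl ⟨i', hi'⟩ from dif_pos hi'] at h2
    exact Sum.inl.inj h2
  · rintro ⟨y, hy⟩
    rcases hx : eIso c f y with ⟨i, hi⟩ | ⟨j, hj⟩
    · refine ⟨⟨i, hi⟩, Subtype.ext ?_⟩
      show (eIso c f).symm (gT c f i) = y
      rw [show gT c f i = Sum.inl ⟨i, hi⟩ from dif_pos hi, ← hx]
      exact (eIso c f).symm_apply_apply y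
    · exfalso
      have : Sum.elim (fun _ => c) (fun _ => !c) (eIso c f y) = c := hy
      rw [hx] at this
      simp at this

lemma hHom_special : LSpecial (!c) (hHom c f) := by
  constructor
  · rintro ⟨x, hx⟩ ⟨y, hy⟩ h
    have h1 : hT c f (eIso c f x) = hT c f (eIso c f y) := congrArg Subtype.val h
    rcases hex : eIso c f x with ⟨i, hi⟩ | ⟨j, hj⟩
    · exfalso
      have : Sum.elim (fun _ => c) (fun _ => !c) (eIso c f x) = !c := hx
      rw [hex] at this; simp at this
    rcases hey : eIso c f y with ⟨i', hi'⟩ | ⟨j', hj'⟩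
    · exfalso
      have : Sum.elim (fun _ => c) (fun _ => !c) (eIso c f y) = !c := hy
      rw [hey] at this; simp at this
    rw [hex, hey] at h1
    simp only [hT] at h1
    have : eIso c f x = eIso c f y := by
      rw [hex, hey]; exact congrArg Sum.inr (Subtype.ext h1)
    exact Subtype.ext ((eIso c f).injective this)
  · rintro ⟨j, hj⟩
    refine ⟨⟨(eIso c f).symm (Sum.inr ⟨j, hj⟩), ?_⟩, Subtype.ext ?_⟩
    · show Sum.elim _ _ ((eIso c f) ((eIso c f).symm _)) = !c
      exact congrArg (Sum.elim (fun _ => c) (fun _ => !c)) ((eIso c f).apply_symm_apply _)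
    · show hT c f ((eIso c f) ((eIso c f).symm _)) = j
      exact congrArg (hT c f) ((eIso c f).apply_symm_apply _)

lemma exists_fac : ∃ (M : EqCat) (g : a ⟶ M) (h : M ⟶ b),
    LSpecial c g ∧ LSpecial (!c) h ∧ g ≫ h = f :=
  ⟨midObj c f, gHom c f, hHom c f, gHom_special c f, hHom_special c f, g_comp_h c f⟩

end Construction

section Uniqueness

variable {c : Bool} {a b M M' : EqCat} {g : a ⟶ M} {h : M ⟶ b} {g' : a ⟶ M'} {h' : M' ⟶ b}

/-- The comparison map between two middle objects of factorizations. -/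
noncomputable def theta (hg : LSpecial c g) (hh : LSpecial (!c) h)
    (hg' : LSpecial c g') (hh' : LSpecial (!c) h') :
    Fin (M.obj.len + 1) → Fin (M'.obj.len + 1) := fun x =>
  if hx : M.col x = c then
    ((Equiv.ofBijective _ hg') ((Equiv.ofBijective _ hg).symm ⟨x, hx⟩)).1
  else
    ((Equiv.ofBijective _ hh').symm ((Equiv.ofBijective _ hh) ⟨x, bnot_of_ne hx⟩)).1

variable (hg : LSpecial c g) (hh : LSpecial (!c) h)
    (hg' : LSpecial c g') (hh' : LSpecial (!c) h')

lemma theta_col (x : Fin (M.obj.len + 1)) :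
    M'.col (theta hg hh hg' hh' x) = M.col x := by
  unfold theta
  split
  · next hx => exact ((Equiv.ofBijective _ hg') ((Equiv.ofBijective _ hg).symm ⟨x, hx⟩)).2.trans hx.symm
  · next hx =>
    exact ((Equiv.ofBijective _ hh').symm ((Equiv.ofBijective _ hh) ⟨x, bnot_of_ne hx⟩)).2.trans
      (bnot_of_ne hx).symm

lemma comp_point (w : g ≫ h = g' ≫ h') (i : Fin (a.obj.len + 1)) :
    h.1.toOrderHom (g.1.toOrderHom i) = h'.1.toOrderHom (g'.1.toOrderHom i) :=
  congrArg (fun m => m.1.toOrderHom i) w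

lemma theta_g (w : g ≫ h = g' ≫ h') (i : Fin (a.obj.len + 1)) :
    theta hg hh hg' hh' (g.1.toOrderHom i) = g'.1.toOrderHom i := by
  unfold theta
  by_cases hi : a.col i = c
  · rw [dif_pos ((g.2 i).trans hi)]
    have e1 : (⟨g.1.toOrderHom i, (g.2 i).trans hi⟩ : {x // M.col x = c}) =
        (Equiv.ofBijective _ hg) ⟨i, hi⟩ := Subtype.ext rfl
    rw [e1, Equiv.symm_apply_apply]
    rfl
  · have hgi : ¬ M.col (g.1.toOrderHom i) = c := by rw [g.2 i]; exact hi
    rw [dif_neg hgi]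
    have e1 : (Equiv.ofBijective _ hh) ⟨g.1.toOrderHom i, bnot_of_ne hgi⟩ =
        (Equiv.ofBijective _ hh') ⟨g'.1.toOrderHom i, (g'.2 i).trans (bnot_of_ne hi)⟩ :=
      Subtype.ext (comp_point w i)
    rw [e1, Equiv.symm_apply_apply]


lemma theta_h (w : g ≫ h = g' ≫ h') (x : Fin (M.obj.len + 1)) :
    h'.1.toOrderHom (theta hg hh hg' hh' x) = h.1.toOrderHom x := by
  by_cases hx : M.col x = c
  · obtain ⟨⟨i, hi⟩, he⟩ : ∃ z, (Equiv.ofBijective _ hg) z = ⟨x, hx⟩ :=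
      ⟨_, Equiv.apply_symm_apply _ _⟩
    have hgx : g.1.toOrderHom i = x := congrArg Subtype.val he
    rw [← hgx, theta_g hg hh hg' hh' w i, ← comp_point w i]
  · unfold theta
    rw [dif_neg hx]
    exact congrArg Subtype.val
      (Equiv.apply_symm_apply (Equiv.ofBijective _ hh') ((Equiv.ofBijective _ hh) ⟨x, bnot_of_ne hx⟩))

lemma theta_strictMono (w : g ≫ h = g' ≫ h') : StrictMono (theta hg hh hg' hh') := by
  intro x y hxy
  have hle : h.1.toOrderHom x ≤ h.1.toOrderHom y := h.1.toOrderHom.monotone hxy.le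
  rcases lt_or_eq_of_le hle with hlt | heq
  · refine h'.1.toOrderHom.monotone.reflect_lt ?_
    rw [theta_h hg hh hg' hh' w, theta_h hg hh hg' hh' w]
    exact hlt
  · have hcx : M.col x = M.col y := by rw [← h.2 x, ← h.2 y, heq]
    by_cases hx : M.col x = c
    · have hy : M.col y = c := hcx.symm.trans hx
      obtain ⟨⟨i, hi⟩, hei⟩ : ∃ z, (Equiv.ofBijective _ hg) z = ⟨x, hx⟩ :=
        ⟨_, Equiv.apply_symm_apply _ _⟩
      obtain ⟨⟨i', hi'⟩, hei'⟩ : ∃ z, (Equiv.ofBijective _ hg) z = ⟨y, hy⟩ :=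
        ⟨_, Equiv.apply_symm_apply _ _⟩
      have hgx : g.1.toOrderHom i = x := congrArg Subtype.val hei
      have hgy : g.1.toOrderHom i' = y := congrArg Subtype.val hei'
      have hii : i < i' := by
        rcases lt_or_ge i i' with hlt | hle'
        · exact hlt
        · exfalso
          have := g.1.toOrderHom.monotone hle'
          rw [hgx, hgy] at this
          exact absurd (le_antisymm this hxy.le) (ne_of_lt hxy).symm
      rw [← hgx, ← hgy, theta_g hg hh hg' hh' w, theta_g hg hh hg' hh' w]
      refine lt_of_le_of_ne (g'.1.toOrderHom.monotone hii.le) fun e => ?_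
      have := hg'.1 (a₁ := ⟨i, hi⟩) (a₂ := ⟨i', hi'⟩) (Subtype.ext e)
      exact absurd (congrArg Subtype.val this) (ne_of_lt hii)
    · exfalso
      have hy : ¬ M.col y = c := fun hy => hx (hcx.trans hy)
      have := hh.1 (a₁ := ⟨x, bnot_of_ne hx⟩) (a₂ := ⟨y, bnot_of_ne hy⟩) (Subtype.ext heq)
      exact absurd (congrArg Subtype.val this) (ne_of_lt hxy)

lemma theta_surjective (w : g ≫ h = g' ≫ h') : Function.Surjective (theta hg hh hg' hh') := by
  intro y
  by_cases hy : M'.col y = c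
  · obtain ⟨⟨i, hi⟩, hei⟩ : ∃ z, (Equiv.ofBijective _ hg') z = ⟨y, hy⟩ :=
      ⟨_, Equiv.apply_symm_apply _ _⟩
    refine ⟨g.1.toOrderHom i, ?_⟩
    rw [theta_g hg hh hg' hh' w i]
    exact congrArg Subtype.val hei
  · refine ⟨((Equiv.ofBijective _ hh).symm ((Equiv.ofBijective _ hh') ⟨y, bnot_of_ne hy⟩)).1, ?_⟩
    unfold theta
    rw [dif_neg (show ¬ _ = c by
      rw [((Equiv.ofBijective _ hh).symm ((Equiv.ofBijective _ hh') ⟨y, bnot_of_ne hy⟩)).2]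
      exact Bool.not_ne_self c)]
    have e1 : (⟨((Equiv.ofBijective _ hh).symm ((Equiv.ofBijective _ hh') ⟨y, bnot_of_ne hy⟩)).1, _⟩ :
        {x // M.col x = !c}) = (Equiv.ofBijective _ hh).symm ((Equiv.ofBijective _ hh') ⟨y, bnot_of_ne hy⟩) :=
      Subtype.ext rfl
    rw [e1, Equiv.apply_symm_apply, Equiv.symm_apply_apply]

lemma fac_unique (hg : LSpecial c g) (hh : LSpecial (!c) h)
    (hg' : LSpecial c g') (hh' : LSpecial (!c) h') (w : g ≫ h = g' ≫ h') : (⟨M, (g, h)⟩ : Σ m : EqCat, (a ⟶ m) × (m ⟶ b)) = ⟨M', (g', h')⟩ := by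
  have sm := theta_strictMono hg hh hg' hh' w
  have surj := theta_surjective hg hh hg' hh' w
  have hlen : M.obj.len + 1 = M'.obj.len + 1 := by
    simpa using Fintype.card_congr (StrictMono.orderIsoOfSurjective _ sm surj).toEquiv
  have hθ : ∀ x, ((theta hg hh hg' hh' x : Fin (M'.obj.len + 1)) : ℕ) = (x : ℕ) := by
    intro x
    have h2 : StrictMono.orderIsoOfSurjective _ sm surj = Fin.castOrderIso hlen :=
      Subsingleton.elim _ _
    have h1 : theta hg hh hg' hh' x = (StrictMono.orderIsoOfSurjective _ sm surj) x :=
      (congrFun (StrictMono.coe_orderIsoOfSurjective _ sm surj) x).symm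
    rw [h1, h2]
    rfl
  have hMobj : M.obj = M'.obj := SimplexCategory.ext (Nat.succ_injective hlen)
  obtain ⟨Mo, Mc⟩ := M
  obtain ⟨Mo', Mc'⟩ := M'
  have hMobj' : Mo = Mo' := hMobj
  subst hMobj'
  have hid : ∀ x, theta hg hh hg' hh' x = x := fun x => Fin.ext (hθ x)
  have hcol : Mc = Mc' := by
    funext x
    rw [show Mc x = ({obj := Mo, col := Mc} : EqCat).col x from rfl,
      ← theta_col hg hh hg' hh' x, hid x]
  subst hcol
  have hgg : g = g' := hom_ext fun i => by
    rw [← theta_g hg hh hg' hh' w i, hid]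
  have hhh : h = h' := hom_ext fun x => by
    rw [← theta_h hg hh hg' hh' w x, hid]
  rw [hgg, hhh]

end Uniqueness

section FSLemmas

lemma lspecial_id (l : Bool) (X : EqCat) : LSpecial l (𝟙 X) := by
  constructor
  · intro x y hxy
    exact Subtype.ext (congrArg Subtype.val hxy)
  · intro y
    exact ⟨⟨y.1, y.2⟩, Subtype.ext rfl⟩

lemma lspecial_comp (l : Bool) {X Y Z : EqCat} (f : X ⟶ Y) (g : Y ⟶ Z)
    (hf : LSpecial l f) (hg : LSpecial l g) : LSpecial l (f ≫ g) := by
  have e : (fun x : {i : Fin (X.obj.len + 1) // X.col i = l} =>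
      (⟨(f ≫ g).1.toOrderHom x.1, by rw [(f ≫ g).2, x.2]⟩ :
        {j : Fin (Z.obj.len + 1) // Z.col j = l})) =
      (fun y : {i : Fin (Y.obj.len + 1) // Y.col i = l} =>
        (⟨g.1.toOrderHom y.1, by rw [g.2, y.2]⟩ : {j : Fin (Z.obj.len + 1) // Z.col j = l})) ∘
      (fun x : {i : Fin (X.obj.len + 1) // X.col i = l} =>
        (⟨f.1.toOrderHom x.1, by rw [f.2, x.2]⟩ : {j : Fin (Y.obj.len + 1) // Y.col j = l})) :=
    funext fun x => Subtype.ext rfl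
  rw [LSpecial, e]
  exact hg.comp hf

lemma lspecial_of_isIso (l : Bool) {X Y : EqCat} (f : X ⟶ Y) (hf : IsIso f) :
    LSpecial l f := by
  obtain ⟨finv, hfi, hif⟩ := hf.out
  have hfi' : ∀ i, finv.1.toOrderHom (f.1.toOrderHom i) = i :=
    fun i => congrArg (fun m => m.1.toOrderHom i) hfi
  have hif' : ∀ j, f.1.toOrderHom (finv.1.toOrderHom j) = j :=
    fun j => congrArg (fun m => m.1.toOrderHom j) hif
  constructor
  · intro x y hxy
    have hv : f.1.toOrderHom x.1 = f.1.toOrderHom y.1 := congrArg Subtype.val hxy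
    apply Subtype.ext
    rw [← hfi' x.1, ← hfi' y.1, hv]
  · intro j
    refine ⟨⟨finv.1.toOrderHom j.1, by rw [finv.2, j.2]⟩, Subtype.ext ?_⟩
    exact hif' j.1

lemma isIso_of_lspecial {l : Bool} {X Y : EqCat} (f : X ⟶ Y)
    (h1 : LSpecial l f) (h2 : LSpecial (!l) f) : IsIso f := by
  have hbij : Function.Bijective f.1.toOrderHom := by
    constructor
    · intro x y hxy
      by_cases hx : X.col x = l
      · have hy : X.col y = l := by rw [← f.2 y, ← hxy, f.2 x, hx]
        exact congrArg Subtype.val (h1.1 (a₁ := ⟨x, hx⟩) (a₂ := ⟨y, hy⟩) (Subtype.ext hxy))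
      · have hy : ¬ X.col y = l := by rw [← f.2 y, ← hxy, f.2 x]; exact hx
        exact congrArg Subtype.val
          (h2.1 (a₁ := ⟨x, bnot_of_ne hx⟩) (a₂ := ⟨y, bnot_of_ne hy⟩) (Subtype.ext hxy))
    · intro j
      by_cases hj : Y.col j = l
      · obtain ⟨i, hi⟩ := h1.2 ⟨j, hj⟩
        exact ⟨i.1, congrArg Subtype.val hi⟩
      · obtain ⟨i, hi⟩ := h2.2 ⟨j, bnot_of_ne hj⟩
        exact ⟨i.1, congrArg Subtype.val hi⟩
  have sm : StrictMono f.1.toOrderHom := f.1.toOrderHom.monotone.strictMono_of_injective hbij.1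
  let oi := StrictMono.orderIsoOfSurjective _ sm hbij.2
  have hoi : ∀ x, oi x = f.1.toOrderHom x :=
    fun x => congrFun (StrictMono.coe_orderIsoOfSurjective _ sm hbij.2) x
  refine ⟨⟨SimplexCategory.Hom.mk ⟨fun j => oi.symm j, oi.symm.monotone⟩, ?_⟩, ?_, ?_⟩
  · intro j
    show X.col (oi.symm j) = Y.col j
    rw [← f.2 (oi.symm j)]
    congr 1
    rw [← hoi, OrderIso.apply_symm_apply]
  · apply hom_ext
    intro i
    show oi.symm (f.1.toOrderHom i) = i
    rw [← hoi, OrderIso.symm_apply_apply]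
  · apply hom_ext
    intro j
    show f.1.toOrderHom (oi.symm j) = j
    rw [← hoi, OrderIso.apply_symm_apply]

lemma endo_iso_eq_refl {M : EqCat} (e : M ≅ M) : e = Iso.refl M := by
  have h1 : e.hom.1 ≫ e.inv.1 = 𝟙 M.obj := congrArg Subtype.val e.hom_inv_id
  have h2 : e.inv.1 ≫ e.hom.1 = 𝟙 M.obj := congrArg Subtype.val e.inv_hom_id
  have : IsIso e.hom.1 := ⟨e.inv.1, h1, h2⟩
  have h3 : e.hom.1 = 𝟙 M.obj := SimplexCategory.eq_id_of_isIso e.hom.1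
  exact Iso.ext (Subtype.ext h3)

lemma fs (c : Bool) : FactorizationSystem EqCat
    (fun _ _ f => LSpecial c f) (fun _ _ f => LSpecial (!c) f) where
  id_mem_left X := lspecial_id c X
  comp_mem_left f g hf hg := lspecial_comp c f g hf hg
  id_mem_right X := lspecial_id (!c) X
  comp_mem_right f g hf hg := lspecial_comp (!c) f g hf hg
  inter_iso f := ⟨fun ⟨h1, h2⟩ => isIso_of_lspecial f h1 h2,
    fun hf => ⟨lspecial_of_isIso c f hf, lspecial_of_isIso (!c) f hf⟩⟩
  fac f := exists_fac c f
  uniq {X Y} f M M' l r l' r' hl hr hl' hr' hlr hl'r' := by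
    have hs := fac_unique hl hr hl' hr' (hlr.trans hl'r'.symm)
    injection hs with hM hp
    subst hM
    have hp' : (l, r) = (l', r') := eq_of_heq hp
    injection hp' with e1 e2
    subst e1; subst e2
    refine ⟨Iso.refl M, ⟨by simp, by simp⟩, fun e' he' => endo_iso_eq_refl e'⟩

end FSLemmas

end FS


/-- **Statement 16.** Every morphism of `eq` factors uniquely as a `0`-special
morphism followed by a `1`-special morphism, and also uniquely as a `1`-special
morphism followed by a `0`-special one; the two classes form a factorization
system on `eq` in either order. -/
theorem stmt16 :
    (∀ {a b : EqCat} (f : a ⟶ b),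
      ∃! p : Σ (m : EqCat), (a ⟶ m) × (m ⟶ b),
        LSpecial false p.2.1 ∧ LSpecial true p.2.2 ∧ p.2.1 ≫ p.2.2 = f) ∧
    (∀ {a b : EqCat} (f : a ⟶ b),
      ∃! p : Σ (m : EqCat), (a ⟶ m) × (m ⟶ b),
        LSpecial true p.2.1 ∧ LSpecial false p.2.2 ∧ p.2.1 ≫ p.2.2 = f) ∧
    FactorizationSystem EqCat
      (fun _ _ f => LSpecial false f) (fun _ _ f => LSpecial true f) ∧
    FactorizationSystem EqCat
      (fun _ _ f => LSpecial true f) (fun _ _ f => LSpecial false f) := by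
  refine ⟨?_, ?_, FS.fs false, FS.fs true⟩
  · intro a b f
    refine ⟨⟨FS.midObj false f, FS.gHom false f, FS.hHom false f⟩,
      ⟨FS.gHom_special false f, FS.hHom_special false f, FS.g_comp_h false f⟩, ?_⟩
    rintro ⟨M', g', h'⟩ ⟨h1, h2, h3⟩
    exact FS.fac_unique h1 h2 (FS.gHom_special false f) (FS.hHom_special false f)
      (h3.trans (FS.g_comp_h false f).symm)
  · intro a b f
    refine ⟨⟨FS.midObj true f, FS.gHom true f, FS.hHom true f⟩,
      ⟨FS.gHom_special true f, FS.hHom_special true f, FS.g_comp_h true f⟩, ?_⟩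
    rintro ⟨M', g', h'⟩ ⟨h1, h2, h3⟩
    exact FS.fac_unique h1 h2 (FS.gHom_special true f) (FS.hHom_special true f)
      (h3.trans (FS.g_comp_h true f).symm)

end Paper
end
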